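/- arXiv:1308.3417 — 3 statements merged into one kernel-verified Lean document; each statement's English description precedes it below -/
import Mathlib

section
/- Let k be an even positive integer and let g be a cusp form of weight k for Γ₀(4) satisfying g∣[k]T_{1/2} = -g. If g∣[k]W₄ = g, then g = 0. In other words, the Fricke involution W₄ has no nonzero fixed vector among cusp forms of weight k for Γ₀(4) whose Fourier expansion is supported on odd exponents. -/
open UpperHalfPlane Matrix MatrixGroups CongruenceSubgroup

noncomputable section

/-- An element of `GL(2,ℝ)⁺` built from a 2×2 real matrix of positive determinant. -/
def mkGLPos (M : Matrix (Fin 2) (Fin 2) ℝ) (h : 0 < M.det) : GL(2, ℝ)⁺ :=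
  ⟨Matrix.GeneralLinearGroup.mkOfDetNeZero M h.ne', by
    simpa [Matrix.mem_glpos, Matrix.GeneralLinearGroup.val_det_apply,
      Matrix.GeneralLinearGroup.mkOfDetNeZero] using h⟩

set_option synthInstance.maxHeartbeats 400000 in
/-- The weight-`k` slash operator with the classical normalization
`(f ∣[k] A)(τ) = det(A)^(k/2) · (cτ+d)^(-k) · f(Aτ)`. -/
def wtSlash (k : ℤ) (A : GL(2, ℝ)⁺) (f : ℍ → ℂ) : ℍ → ℂ := fun τ =>
  ((((A : GL (Fin 2) ℝ) : Matrix (Fin 2) (Fin 2) ℝ).det ^ ((k : ℝ) / 2) : ℝ) : ℂ) *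
    (UpperHalfPlane.denom A τ) ^ (-k) * f (A • τ)

/-- The image of an integral special linear matrix in `GL(2,ℝ)⁺`. -/
def toGL (γ : SL(2, ℤ)) : GL(2, ℝ)⁺ :=
  Matrix.SpecialLinearGroup.toGLPos (γ.map (Int.castRingHom ℝ))

/-- `W₄ = [[0,-1],[4,0]]` as an element of `GL(2,ℝ)⁺`. -/
def W4 : GL(2, ℝ)⁺ := mkGLPos !![0, -1; 4, 0] (by norm_num [Matrix.det_fin_two_of])

/-- `T_{1/2} = [[1,1/2],[0,1]]` as an element of `GL(2,ℝ)⁺`. -/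
def Thalf : GL(2, ℝ)⁺ := mkGLPos !![1, 1/2; 0, 1] (by norm_num [Matrix.det_fin_two_of])

set_option synthInstance.maxHeartbeats 400000

lemma det_pos' (A : GL(2, ℝ)⁺) :
    0 < (((A : GL (Fin 2) ℝ) : Matrix (Fin 2) (Fin 2) ℝ)).det := by
  have h := (Matrix.mem_glpos _).1 A.prop
  rwa [Matrix.GeneralLinearGroup.val_det_apply] at h

lemma denom_cocycle' (A B : GL(2, ℝ)⁺) (x : ℍ) :
    denom (A * B) x = denom A ((B • x : ℍ) : ℂ) * denom B x := by
  rw [denom_cocycle_σ, σ,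
    if_pos (by simpa [Matrix.GeneralLinearGroup.val_det_apply] using det_pos' B),
    ContinuousAlgEquiv.refl_apply]
  rfl

lemma wtSlash_mul (k : ℤ) (A B : GL(2, ℝ)⁺) (f : ℍ → ℂ) :
    wtSlash k (A * B) f = wtSlash k B (wtSlash k A f) := by
  funext x
  simp only [wtSlash]
  rw [Subgroup.coe_mul, _root_.denom_cocycle' A B x]
  simp only [wtSlash, _root_.denom_cocycle' A B x, mul_smul, Subgroup.coe_mul, Units.val_mul,
    Matrix.det_mul, Real.mul_rpow (det_pos' A).le (det_pos' B).le, Complex.ofReal_mul, mul_zpow]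
  ring

lemma wtSlash_neg (k : ℤ) (A : GL(2, ℝ)⁺) (f : ℍ → ℂ) :
    wtSlash k A (-f) = -(wtSlash k A f) := by
  funext x
  simp only [wtSlash, Pi.neg_apply, mul_neg]

/-- The key matrix identity: `(W₄ · T_{1/2})³ = -8·I`. -/
lemma matP3 :
    ((((W4 * Thalf) * (W4 * Thalf) * (W4 * Thalf) : GL(2, ℝ)⁺) : GL (Fin 2) ℝ) :
      Matrix (Fin 2) (Fin 2) ℝ) = !![(-8 : ℝ), 0; 0, -8] := by
  show ((!![(0:ℝ), -1; 4, 0] * !![(1:ℝ), 1/2; 0, 1]) * (!![(0:ℝ), -1; 4, 0] * !![(1:ℝ), 1/2; 0, 1])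
      * (!![(0:ℝ), -1; 4, 0] * !![(1:ℝ), 1/2; 0, 1])) = _
  norm_num [Matrix.mul_fin_two]

lemma wtSlash_P3 (k : ℤ) (hke : Even k) (f : ℍ → ℂ) :
    wtSlash k ((W4 * Thalf) * (W4 * Thalf) * (W4 * Thalf)) f = f := by
  set Q := (W4 * Thalf) * (W4 * Thalf) * (W4 * Thalf) with hQdef
  funext x
  have hm := matP3
  have hdet : (((Q : GL (Fin 2) ℝ) : Matrix (Fin 2) (Fin 2) ℝ)).det = 64 := by
    rw [hm]; norm_num [Matrix.det_fin_two_of]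
  have hden : UpperHalfPlane.denom Q x = -8 := by
    have h10 : ((Q : GL (Fin 2) ℝ) : Matrix (Fin 2) (Fin 2) ℝ) 1 0 = 0 := by rw [hm]; norm_num
    have h11 : ((Q : GL (Fin 2) ℝ) : Matrix (Fin 2) (Fin 2) ℝ) 1 1 = -8 := by rw [hm]; norm_num
    show (((Q : GL (Fin 2) ℝ) : Matrix (Fin 2) (Fin 2) ℝ) 1 0 : ℂ) * x
        + (((Q : GL (Fin 2) ℝ) : Matrix (Fin 2) (Fin 2) ℝ) 1 1 : ℂ) = -8
    rw [h10, h11]; push_cast; ring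
  have hsm : Q • x = x := by
    apply UpperHalfPlane.ext
    rw [show (Q • x : ℍ) = (Q : GL (Fin 2) ℝ) • x from rfl, coe_smul_of_det_pos
      (by simpa [Matrix.GeneralLinearGroup.val_det_apply] using det_pos' Q)]
    show UpperHalfPlane.num Q x / UpperHalfPlane.denom Q x = (x : ℂ)
    rw [hden]
    have h00 : ((Q : GL (Fin 2) ℝ) : Matrix (Fin 2) (Fin 2) ℝ) 0 0 = -8 := by rw [hm]; norm_num
    have h01 : ((Q : GL (Fin 2) ℝ) : Matrix (Fin 2) (Fin 2) ℝ) 0 1 = 0 := by rw [hm]; norm_num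
    have hnum : UpperHalfPlane.num Q x = -8 * x := by
      show (((Q : GL (Fin 2) ℝ) : Matrix (Fin 2) (Fin 2) ℝ) 0 0 : ℂ) * x
          + (((Q : GL (Fin 2) ℝ) : Matrix (Fin 2) (Fin 2) ℝ) 0 1 : ℂ) = -8 * x
      rw [h00, h01]; push_cast; ring
    rw [hnum]
    field_simp
  have hrpow : ((64 : ℝ)) ^ ((k : ℝ) / 2) = (8 : ℝ) ^ k := by
    have h8 : (0 : ℝ) ≤ 8 := by norm_num
    have h64 : (64 : ℝ) = (8 : ℝ) ^ (2 : ℝ) := by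
      rw [show ((2:ℝ)) = ((2:ℕ) : ℝ) by norm_num, Real.rpow_natCast]; norm_num
    rw [h64, ← Real.rpow_mul h8]
    rw [show (2 : ℝ) * ((k : ℝ) / 2) = (k : ℝ) by ring, ← Real.rpow_intCast]
  simp only [wtSlash, hdet, hden, hsm, hrpow]
  have hneg : ((-8 : ℂ)) ^ (-k) = ((8 : ℂ) ^ k)⁻¹ := by
    have h1 : ((-8 : ℂ)) ^ k = (8 : ℂ) ^ k := by
      rw [show ((-8 : ℂ)) = -(8 : ℂ) from by norm_num]
      exact hke.neg_zpow 8
    rw [_root_.zpow_neg, h1]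
  rw [hneg]
  push_cast
  rw [mul_inv_cancel₀ (zpow_ne_zero k (by norm_num : (8:ℂ) ≠ 0)), one_mul]

/-- a cusp form of even positive weight `k` for `Γ₀(4)` with
`g∣[k]T_{1/2} = -g` cannot be fixed by the Fricke involution `W₄` unless it is zero. -/
theorem fricke_no_fixed_vector (k : ℤ) (hk : 0 < k) (hke : Even k)
    (g : CuspForm (Gamma0 4) k)
    (hT : wtSlash k Thalf ⇑g = -⇑g) (hW : wtSlash k W4 ⇑g = ⇑g) :
    g = 0 := by
  have h1 : wtSlash k (W4 * Thalf) ⇑g = -⇑g := by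
    rw [wtSlash_mul, hW, hT]
  have h2 : wtSlash k ((W4 * Thalf) * (W4 * Thalf)) ⇑g = ⇑g := by
    rw [wtSlash_mul, h1, wtSlash_neg, h1, neg_neg]
  have h3 : wtSlash k ((W4 * Thalf) * (W4 * Thalf) * (W4 * Thalf)) ⇑g = -⇑g := by
    rw [wtSlash_mul, h2, h1]
  rw [wtSlash_P3 k hke] at h3
  ext x
  have hx : g x = -g x := congrFun h3 x
  have hzero : g x = 0 := by linear_combination hx / 2
  simpa using hzero

end
end

section
/- Let k be an even positive integer and let χ : SL(2,ℤ) → ℂˣ be the unique group homomorphism with χ(S) = χ(T) = -1. The map sending f to the function τ ↦ f(2τ) is a ℂ-linear bijection from the space {f : f is a cusp form of weight k for Γ(2) and f∣[k]γ = χ(γ)·f for all γ ∈ SL(2,ℤ)} onto the space {g : g is a cusp form of weight k for Γ₀(4), g∣[k]W₄ = -g, and g∣[k]T_{1/2} = -g}. -/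
open UpperHalfPlane Matrix MatrixGroups CongruenceSubgroup ModularForm Filter ModularGroup
open scoped Manifold ModularForm

noncomputable section

/-- The map `τ ↦ 2τ` on the upper half-plane. -/
def double (τ : ℍ) : ℍ := ⟨2 * (τ : ℂ), by simpa [Complex.mul_im] using τ.2⟩

lemma wtSlash_add (k : ℤ) (A : GL(2, ℝ)⁺) (f g : ℍ → ℂ) :
    wtSlash k A (f + g) = wtSlash k A f + wtSlash k A g := by
  funext τ
  simp only [wtSlash, Pi.add_apply]
  ring

lemma wtSlash_smul (k : ℤ) (A : GL(2, ℝ)⁺) (c : ℂ) (f : ℍ → ℂ) :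
    wtSlash k A (c • f) = c • wtSlash k A f := by
  funext τ
  simp only [wtSlash, Pi.smul_apply, smul_eq_mul]
  ring

lemma wtSlash_zero (k : ℤ) (A : GL(2, ℝ)⁺) : wtSlash k A (0 : ℍ → ℂ) = 0 := by
  funext τ
  simp [wtSlash]

set_option synthInstance.maxHeartbeats 1000000
namespace Aux

abbrev mat (A : GL(2, ℝ)⁺) : Matrix (Fin 2) (Fin 2) ℝ := ((A : GL (Fin 2) ℝ) : Matrix (Fin 2) (Fin 2) ℝ)

lemma glpos_ext {A B : GL(2, ℝ)⁺} (h : mat A = mat B) : A = B :=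
  Subtype.ext (Units.ext h)

@[simp] lemma mat_mkGLPos (M : Matrix (Fin 2) (Fin 2) ℝ) (h : 0 < M.det) :
    mat (mkGLPos M h) = M := rfl

@[simp] lemma mat_mul (A B : GL(2, ℝ)⁺) : mat (A * B) = mat A * mat B := rfl

@[simp] lemma mat_toGL (γ : SL(2, ℤ)) :
    mat (toGL γ) = (γ : Matrix (Fin 2) (Fin 2) ℤ).map ((↑) : ℤ → ℝ) := rfl

lemma det_mat_pos (A : GL(2, ℝ)⁺) : 0 < (mat A).det := by
  have := A.2
  rwa [Matrix.mem_glpos, Matrix.GeneralLinearGroup.val_det_apply] at this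

lemma det_mat_toGL (γ : SL(2, ℤ)) : (mat (toGL γ)).det = 1 :=
  Matrix.SpecialLinearGroup.det_coe (γ.map (Int.castRingHom ℝ))

lemma wtSlash_mul (k : ℤ) (A B : GL(2, ℝ)⁺) (f : ℍ → ℂ) :
    wtSlash k (A * B) f = wtSlash k B (wtSlash k A f) := by
  funext τ
  have hA := det_mat_pos A
  have hB := det_mat_pos B
  have hdet : (mat (A * B)).det = (mat A).det * (mat B).det := by
    rw [mat_mul, Matrix.det_mul]
  have hrpow : ((mat (A * B)).det : ℝ) ^ ((k : ℝ) / 2)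
      = (mat A).det ^ ((k : ℝ) / 2) * (mat B).det ^ ((k : ℝ) / 2) := by
    rw [hdet, Real.mul_rpow hA.le hB.le]
  have hden : denom ((A * B : GL(2, ℝ)⁺) : GL (Fin 2) ℝ) τ = denom A ((B • τ : ℍ) : ℂ) * denom B τ := by
    show denom (A * B) τ = denom A (((B : GL (Fin 2) ℝ) • τ : ℍ) : ℂ) * denom B τ
    rw [UpperHalfPlane.coe_smul_of_det_pos (by rw [Matrix.GeneralLinearGroup.val_det_apply]; exact hB)]
    exact denom_cocycle A B τ.im_ne_zero
  have hsmul : (A * B) • τ = A • (B • τ) := mul_smul A B τ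
  simp only [wtSlash, hrpow, hden, hsmul, mul_zpow, Complex.ofReal_mul]
  ring

lemma wtSlash_one (k : ℤ) (f : ℍ → ℂ) : wtSlash k 1 f = f := by
  funext τ
  have h1 : mat 1 = 1 := rfl
  have hd : denom (1 : GL(2, ℝ)⁺) τ = 1 := by
    simp [denom, Matrix.one_apply]
  simp [wtSlash, h1, hd]

lemma wtSlash_SL (k : ℤ) (γ : SL(2, ℤ)) (f : ℍ → ℂ) :
    wtSlash k (toGL γ) f = f ∣[k] γ := by
  funext τ
  have h1 : (mat (toGL γ)).det = 1 := det_mat_toGL γ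
  rw [ModularForm.SL_slash_apply]
  show _ = f ((toGL γ : GL (Fin 2) ℝ) • τ) * denom (toGL γ : GL (Fin 2) ℝ) τ ^ (-k)
  simp only [wtSlash, h1]
  norm_num
  ring
  rfl


lemma SL2_neg_one_eq : ((S * S : SL(2,ℤ)) : Matrix (Fin 2) (Fin 2) ℤ) = -1 := by
  rw [Matrix.SpecialLinearGroup.coe_mul]
  exact S_mul_S_eq

lemma mem_closure_S_T (γ : SL(2, ℤ)) : γ ∈ Subgroup.closure ({S, T} : Set SL(2,ℤ)) := by
  set C := Subgroup.closure ({S, T} : Set SL(2,ℤ)) with hC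
  have hS : S ∈ C := Subgroup.subset_closure (by simp)
  have hT : T ∈ C := Subgroup.subset_closure (by simp)
  suffices H : ∀ n : ℕ, ∀ γ : SL(2, ℤ), (γ 1 0).natAbs = n → γ ∈ C from H _ γ rfl
  intro n
  induction n using Nat.strong_induction_on with
  | _ n ih =>
    intro γ hγ
    by_cases hc : γ 1 0 = 0
    · have hdet : γ 0 0 * γ 1 1 - γ 0 1 * γ 1 0 = 1 := by
        have h2 := γ.2
        rwa [Matrix.det_fin_two] at h2
      rw [hc, mul_zero, sub_zero] at hdet
      rcases Int.mul_eq_one_iff_eq_one_or_neg_one.mp hdet with ha | ha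
      · have : γ = T ^ (γ 0 1) := by
          apply Subtype.ext
          rw [coe_T_zpow]
          ext i j
          fin_cases i <;> fin_cases j <;>
            simp [ha.1, ha.2, hc]
        rw [this]; exact zpow_mem hT _
      · have : γ = S * S * T ^ (-(γ 0 1)) := by
          apply Subtype.ext
          rw [Matrix.SpecialLinearGroup.coe_mul, SL2_neg_one_eq, coe_T_zpow]
          ext i j
          fin_cases i <;> fin_cases j <;>
            simp [ha.1, ha.2, hc]
        rw [this]; exact mul_mem (mul_mem hS hS) (zpow_mem hT _)
    · have hδ10 : ((S * (T ^ (-(γ 0 0 / γ 1 0)) * γ) : SL(2,ℤ)) : Matrix (Fin 2) (Fin 2) ℤ) 1 0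
          = γ 0 0 % γ 1 0 := by
        rw [Matrix.SpecialLinearGroup.coe_mul, Matrix.SpecialLinearGroup.coe_mul, coe_S,
          coe_T_zpow, Int.emod_def]
        simp [Matrix.mul_apply, Matrix.vecMul, dotProduct, Fin.sum_univ_two]
        ring
      have hlt : (γ 0 0 % γ 1 0).natAbs < n := by
        have h1 : 0 ≤ γ 0 0 % γ 1 0 := Int.emod_nonneg _ hc
        have h2 : γ 0 0 % γ 1 0 < |γ 1 0| := by
            have := Int.emod_lt (γ 0 0) hc; rwa [Int.natCast_natAbs] at this
        have := Int.natAbs_lt_natAbs_of_nonneg_of_lt h1 h2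
        rwa [Int.natAbs_abs, hγ] at this
      have hδC : (S * (T ^ (-(γ 0 0 / γ 1 0)) * γ)) ∈ C := ih _ hlt _ (by rw [hδ10])
      have hgroup : γ = T ^ (γ 0 0 / γ 1 0) * (S⁻¹ * (S * (T ^ (-(γ 0 0 / γ 1 0)) * γ))) := by
        group
      rw [hgroup]
      exact mul_mem (zpow_mem hT _) (mul_mem (inv_mem hS) hδC)

/-- Hermite-type decomposition of an integral matrix of determinant 2. -/
lemma decomp (N : Matrix (Fin 2) (Fin 2) ℤ) (hN : N.det = 2) :
    ∃ (B : SL(2,ℤ)) (p q s : ℤ), 0 < p ∧ 0 < s ∧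
      (B : Matrix (Fin 2) (Fin 2) ℤ) * !![p, q; 0, s] = N := by
  have hdet : N 0 0 * N 1 1 - N 0 1 * N 1 0 = 2 := by rwa [Matrix.det_fin_two] at hN
  have hne : ¬(N 0 0 = 0 ∧ N 1 0 = 0) := by
    rintro ⟨h1, h2⟩
    rw [h1, h2] at hdet
    omega
  have hgcd : 0 < Int.gcd (N 0 0) (N 1 0) := by
    rw [Int.gcd_pos_iff]
    by_contra h
    push_neg at h
    exact hne ⟨h.1, h.2⟩
  set e : ℤ := (Int.gcd (N 0 0) (N 1 0) : ℤ) with he_def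
  have he0 : 0 < e := by rw [he_def]; exact_mod_cast hgcd
  have hbez : e = N 0 0 * Int.gcdA (N 0 0) (N 1 0) + N 1 0 * Int.gcdB (N 0 0) (N 1 0) :=
    Int.gcd_eq_gcd_ab (N 0 0) (N 1 0)
  set u := Int.gcdA (N 0 0) (N 1 0)
  set v := Int.gcdB (N 0 0) (N 1 0)
  obtain ⟨α, hα⟩ : e ∣ N 0 0 := Int.gcd_dvd_left _ _
  obtain ⟨β, hβ⟩ : e ∣ N 1 0 := Int.gcd_dvd_right _ _
  obtain ⟨s, hs⟩ : e ∣ 2 := by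
    rw [← hdet]
    exact dvd_sub (Dvd.dvd.mul_right ⟨α, hα⟩ _) (Dvd.dvd.mul_left ⟨β, hβ⟩ _)
  have hBdet : α * u + v * β = 1 := by
    have h := hbez
    rw [hα, hβ] at h
    have : e * (α * u + v * β) = e * 1 := by ring_nf; linarith [h]
    exact mul_left_cancel₀ he0.ne' this
  have hs0 : 0 < s := by nlinarith
  refine ⟨⟨!![α, -v; β, u], by rw [Matrix.det_fin_two_of]; ring_nf; linarith [hBdet]⟩,
    e, u * N 0 1 + v * N 1 1, s, he0, hs0, ?_⟩
  show !![α, -v; β, u] * !![e, u * N 0 1 + v * N 1 1; 0, s] = N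
  have h01 : α * (u * N 0 1 + v * N 1 1) + -v * s = N 0 1 := by
    apply mul_left_cancel₀ he0.ne'
    linear_combination (-(u * N 0 1 + v * N 1 1)) * hα + v * hs + v * hdet + (-(N 0 1)) * hbez
  have h11 : β * (u * N 0 1 + v * N 1 1) + u * s = N 1 1 := by
    apply mul_left_cancel₀ he0.ne'
    linear_combination (-(u * N 0 1 + v * N 1 1)) * hβ + (-u) * hs + (-u) * hdet + (-(N 1 1)) * hbez
  ext i j
  fin_cases i <;> fin_cases j <;>
    simp [Matrix.mul_apply, Fin.sum_univ_two]
  · linarith [hα]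
  · linarith [h01]
  · linarith [hβ]
  · linarith [h11]

def halfH (τ : ℍ) : ℍ := ⟨(τ : ℂ) / 2, by
  have h := τ.2
  have h2 : ((τ : ℂ) / 2).im = (τ : ℂ).im / 2 := by
    rw [Complex.div_im]; simp; ring
  rw [h2]; positivity⟩

lemma denom_mkGLPos (M : Matrix (Fin 2) (Fin 2) ℝ) (h : 0 < M.det) (τ : ℍ) :
    denom (mkGLPos M h) τ = (M 1 0 : ℂ) * τ + M 1 1 := rfl

lemma coe_smul_mkGLPos (M : Matrix (Fin 2) (Fin 2) ℝ) (h : 0 < M.det) (τ : ℍ) :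
    ((mkGLPos M h • τ : ℍ) : ℂ)
      = ((M 0 0 : ℂ) * τ + M 0 1) / ((M 1 0 : ℂ) * τ + M 1 1) := by
  show (((mkGLPos M h : GL (Fin 2) ℝ) • τ : ℍ) : ℂ) = _
  rw [UpperHalfPlane.coe_smul_of_det_pos (by rw [Matrix.GeneralLinearGroup.val_det_apply]; exact h)]; rfl

lemma im_smul_tri (p q s : ℝ) (hs : 0 < s) (hd : 0 < Matrix.det !![p, q; 0, s]) (τ : ℍ) :
    (mkGLPos !![p, q; 0, s] hd • τ).im = p / s * τ.im := by
  show (((mkGLPos !![p, q; 0, s] hd : GL (Fin 2) ℝ) • τ : ℍ)).im = _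
  rw [UpperHalfPlane.im_smul_eq_div_normSq, Matrix.GeneralLinearGroup.val_det_apply,
    abs_of_pos (det_mat_pos (mkGLPos !![p, q; 0, s] hd))]
  have hden : denom (mkGLPos !![p, q; 0, s] hd) τ = (s : ℂ) := by
    rw [denom_mkGLPos]; simp
  have hdet2 : Matrix.det (mat (mkGLPos !![p, q; 0, s] hd)) = p * s := by
    rw [mat_mkGLPos, Matrix.det_fin_two_of]; ring
  rw [hden, Complex.normSq_ofReal]
  show Matrix.det (mat (mkGLPos !![p, q; 0, s] hd)) * τ.im / (s * s) = _
  rw [hdet2]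
  field_simp

lemma tendsto_smul_tri (p q s : ℝ) (hp : 0 < p) (hs : 0 < s)
    (hd : 0 < Matrix.det !![p, q; 0, s]) :
    Filter.Tendsto (fun τ : ℍ => mkGLPos !![p, q; 0, s] hd • τ) atImInfty atImInfty := by
  rw [show atImInfty = Filter.comap UpperHalfPlane.im Filter.atTop from rfl,
    Filter.tendsto_comap_iff]
  have h1 : Filter.Tendsto UpperHalfPlane.im atImInfty Filter.atTop := Filter.tendsto_comap
  exact (h1.const_mul_atTop (div_pos hp hs)).congr
    fun τ => (im_smul_tri p q s hs hd τ).symm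

lemma zeroAt_wtSlash_int {k : ℤ} {Γ : Subgroup SL(2,ℤ)} [Γ.FiniteIndex] (f : CuspForm Γ k)
    (N : Matrix (Fin 2) (Fin 2) ℤ) (hN : N.det = 2) (h : 0 < ((N.map ((↑) : ℤ → ℝ))).det) :
    IsZeroAtImInfty (wtSlash k (mkGLPos (N.map ((↑) : ℤ → ℝ)) h) ⇑f) := by
  obtain ⟨B, p, q, s, hp, hs, hmul⟩ := decomp N hN
  have hp' : (0:ℝ) < (p:ℝ) := by exact_mod_cast hp
  have hs' : (0:ℝ) < (s:ℝ) := by exact_mod_cast hs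
  have hdetT : 0 < Matrix.det !![(p:ℝ), (q:ℝ); 0, (s:ℝ)] := by
    rw [Matrix.det_fin_two_of]
    have : (p:ℝ) * s - q * 0 = p * s := by ring
    rw [this]
    positivity
  have hfac : mkGLPos (N.map ((↑) : ℤ → ℝ)) h
      = toGL B * mkGLPos !![(p:ℝ), (q:ℝ); 0, (s:ℝ)] hdetT := by
    apply glpos_ext
    rw [mat_mul, mat_toGL, mat_mkGLPos, mat_mkGLPos, ← hmul]
    rw [show ((B : Matrix (Fin 2) (Fin 2) ℤ) * !![p, q; 0, s]).map ((↑) : ℤ → ℝ)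
        = (B : Matrix (Fin 2) (Fin 2) ℤ).map ((↑) : ℤ → ℝ)
          * (!![p, q; 0, s]).map ((↑) : ℤ → ℝ) from
      Matrix.map_mul (f := Int.castRingHom ℝ)]
    congr 1
    ext i j
    fin_cases i <;> fin_cases j <;> simp
  have wtSlash_apply_tri : ∀ (p q s : ℝ) (hd : 0 < Matrix.det !![p,q;0,s]) (g : ℍ → ℂ) (τ : ℍ),
      wtSlash k (mkGLPos !![p,q;0,s] hd) g τ
      = (((p*s) ^ ((k:ℝ)/2) : ℝ) : ℂ) * (s:ℂ)^(-k) * g (mkGLPos !![p,q;0,s] hd • τ) := by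
    intro p q s hd g τ
    show ((((!![p,q;0,s]).det ^ ((k:ℝ)/2) : ℝ)) : ℂ)
        * (denom (mkGLPos !![p,q;0,s] hd) τ)^(-k) * _ = _
    rw [Matrix.det_fin_two_of, denom_mkGLPos]
    norm_num
  rw [hfac, wtSlash_mul, wtSlash_SL]
  have h0 : IsZeroAtImInfty (⇑f ∣[k] B) := CuspFormClass.zero_at_infty_slash f B
  have key := (h0.comp (tendsto_smul_tri (p:ℝ) (q:ℝ) (s:ℝ) hp' hs' hdetT)).const_mul
      (((((p:ℝ) * s) ^ ((k:ℝ)/2) : ℝ) : ℂ) * ((s:ℝ):ℂ) ^ (-k))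
  rw [mul_zero] at key
  refine key.congr fun τ => ?_
  rw [wtSlash_apply_tri]
  rfl

lemma mapsTo_double : Set.MapsTo (fun z : ℂ => 2 * z) {z : ℂ | 0 < z.im} {z : ℂ | 0 < z.im} := by
  intro z hz
  simp only [Set.mem_setOf_eq] at hz ⊢
  rw [Complex.mul_im]
  simp
  linarith

lemma double_ofComplex {z : ℂ} (hz : 0 < z.im) : double (ofComplex z) = ofComplex (2 * z) := by
  rw [ofComplex_apply_of_im_pos hz, ofComplex_apply_of_im_pos (mapsTo_double hz)]
  exact UpperHalfPlane.ext rfl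

lemma mdiff_double {f : ℍ → ℂ} (hf : MDifferentiable 𝓘(ℂ) 𝓘(ℂ) f) :
    MDifferentiable 𝓘(ℂ) 𝓘(ℂ) (fun τ => f (double τ)) := by
  rw [UpperHalfPlane.mdifferentiable_iff] at hf ⊢
  have h2 : DifferentiableOn ℂ (fun z => (f ∘ ofComplex) (2 * z)) {z : ℂ | 0 < z.im} :=
    hf.comp ((differentiable_id.const_mul (2:ℂ)).differentiableOn) mapsTo_double
  refine h2.congr fun z hz => ?_
  simp only [Function.comp_apply]
  exact congrArg f (double_ofComplex hz)

lemma mapsTo_half : Set.MapsTo (fun z : ℂ => z / 2) {z : ℂ | 0 < z.im} {z : ℂ | 0 < z.im} := by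
  intro z hz
  simp only [Set.mem_setOf_eq] at hz ⊢
  rw [Complex.div_im]
  simp
  positivity

lemma half_ofComplex {z : ℂ} (hz : 0 < z.im) : halfH (ofComplex z) = ofComplex (z / 2) := by
  rw [ofComplex_apply_of_im_pos hz, ofComplex_apply_of_im_pos (mapsTo_half hz)]
  exact UpperHalfPlane.ext rfl

lemma mdiff_half {f : ℍ → ℂ} (hf : MDifferentiable 𝓘(ℂ) 𝓘(ℂ) f) :
    MDifferentiable 𝓘(ℂ) 𝓘(ℂ) (fun τ => f (halfH τ)) := by
  rw [UpperHalfPlane.mdifferentiable_iff] at hf ⊢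
  have h2 : DifferentiableOn ℂ (fun z => (f ∘ ofComplex) (z / 2)) {z : ℂ | 0 < z.im} :=
    hf.comp ((differentiable_id.div_const (2:ℂ)).differentiableOn) mapsTo_half
  refine h2.congr fun z hz => ?_
  simp only [Function.comp_apply]
  exact congrArg f (half_ofComplex hz)

def Dg : GL(2, ℝ)⁺ := mkGLPos !![2, 0; 0, 1] (by norm_num [Matrix.det_fin_two_of])
def Dinv : GL(2, ℝ)⁺ := mkGLPos !![1/2, 0; 0, 1] (by norm_num [Matrix.det_fin_two_of])
def twoI : GL(2, ℝ)⁺ := mkGLPos !![2, 0; 0, 2] (by norm_num [Matrix.det_fin_two_of])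
def halfI : GL(2, ℝ)⁺ := mkGLPos !![1/2, 0; 0, 1/2] (by norm_num [Matrix.det_fin_two_of])

lemma wtSlash_apply_tri (k : ℤ) (p q s : ℝ) (hd : 0 < Matrix.det !![p,q;0,s]) (g : ℍ → ℂ) (τ : ℍ) :
    wtSlash k (mkGLPos !![p,q;0,s] hd) g τ
      = (((p*s) ^ ((k:ℝ)/2) : ℝ) : ℂ) * (s:ℂ)^(-k) * g (mkGLPos !![p,q;0,s] hd • τ) := by
  show ((((!![p,q;0,s]).det ^ ((k:ℝ)/2) : ℝ)) : ℂ)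
      * (denom (mkGLPos !![p,q;0,s] hd) τ)^(-k) * _ = _
  rw [Matrix.det_fin_two_of, denom_mkGLPos]
  norm_num

lemma wtSlash_scalarI (k : ℤ) (c : ℝ) (hc : 0 < c) (hd : 0 < Matrix.det !![c,0;0,c])
    (f : ℍ → ℂ) : wtSlash k (mkGLPos !![c,0;0,c] hd) f = f := by
  funext τ
  rw [wtSlash_apply_tri]
  have hsmul : mkGLPos !![c,0;0,c] hd • τ = τ := by
    apply UpperHalfPlane.ext
    rw [coe_smul_mkGLPos]
    show ((c:ℂ) * τ + ((0:ℝ):ℂ)) / (((0:ℝ):ℂ) * τ + (c:ℂ)) = (τ:ℂ)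
    have hc' : ((c:ℂ)) ≠ 0 := by exact_mod_cast hc.ne'
    push_cast
    rw [zero_mul, add_zero, zero_add, mul_comm, mul_div_assoc, div_self hc', mul_one]
  rw [hsmul]
  have h1 : (c*c) ^ ((k:ℝ)/2) = c ^ (k:ℤ) := by
    rw [show c*c = c^(2:ℕ) by ring, ← Real.rpow_natCast c 2, ← Real.rpow_mul hc.le]
    rw [show ((2:ℕ):ℝ) * ((k:ℝ)/2) = (k:ℝ) by push_cast; ring]
    exact Real.rpow_intCast c k
  rw [h1, Complex.ofReal_zpow]
  have h2 : ((c:ℂ))^(k:ℤ) * (c:ℂ)^(-k) = 1 := by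
    rw [_root_.zpow_neg]
    exact mul_inv_cancel₀ (zpow_ne_zero _ (by exact_mod_cast hc.ne'))
  rw [h2, one_mul]

lemma wtSlash_twoI (k : ℤ) (f : ℍ → ℂ) : wtSlash k twoI f = f :=
  wtSlash_scalarI k 2 (by norm_num) _ f

lemma wtSlash_halfI (k : ℤ) (f : ℍ → ℂ) : wtSlash k halfI f = f :=
  wtSlash_scalarI k (1/2) (by norm_num) _ f

lemma Dg_smul (τ : ℍ) : Dg • τ = double τ := by
  apply UpperHalfPlane.ext
  rw [show Dg • τ = mkGLPos !![(2:ℝ),0;0,1] (by norm_num [Matrix.det_fin_two_of]) • τ from rfl,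
    coe_smul_mkGLPos]
  show (((2:ℝ):ℂ) * τ + ((0:ℝ):ℂ)) / (((0:ℝ):ℂ) * τ + ((1:ℝ):ℂ)) = 2 * (τ:ℂ)
  push_cast
  rw [zero_mul, add_zero, zero_add, div_one]

lemma Dinv_smul (τ : ℍ) : Dinv • τ = halfH τ := by
  apply UpperHalfPlane.ext
  rw [show Dinv • τ = mkGLPos !![(1/2:ℝ),0;0,1] (by norm_num [Matrix.det_fin_two_of]) • τ from rfl,
    coe_smul_mkGLPos]
  show (((1/2:ℝ):ℂ) * τ + ((0:ℝ):ℂ)) / (((0:ℝ):ℂ) * τ + ((1:ℝ):ℂ)) = (τ:ℂ) / 2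
  push_cast
  rw [zero_mul, add_zero, zero_add, div_one]
  ring

def cD (k : ℤ) : ℂ := (((2:ℝ) ^ ((k:ℝ)/2) : ℝ) : ℂ)
def cDinv (k : ℤ) : ℂ := (((1/2:ℝ) ^ ((k:ℝ)/2) : ℝ) : ℂ)

lemma cD_ne_zero (k : ℤ) : cD k ≠ 0 := by
  simp only [cD, ne_eq, Complex.ofReal_eq_zero]
  positivity
lemma cDinv_ne_zero (k : ℤ) : cDinv k ≠ 0 := by
  simp only [cDinv, ne_eq, Complex.ofReal_eq_zero]
  positivity

lemma wtSlash_Dg (k : ℤ) (f : ℍ → ℂ) :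
    wtSlash k Dg f = cD k • fun τ => f (double τ) := by
  funext τ
  rw [show wtSlash k Dg f τ = wtSlash k (mkGLPos !![(2:ℝ),0;0,1]
      (by norm_num [Matrix.det_fin_two_of])) f τ from rfl, wtSlash_apply_tri]
  rw [show mkGLPos !![(2:ℝ),0;0,1] (by norm_num [Matrix.det_fin_two_of]) • τ = Dg • τ from rfl,
    Dg_smul]
  simp only [Pi.smul_apply, smul_eq_mul, cD]
  norm_num

lemma wtSlash_Dinv (k : ℤ) (f : ℍ → ℂ) :
    wtSlash k Dinv f = cDinv k • fun τ => f (halfH τ) := by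
  funext τ
  rw [show wtSlash k Dinv f τ = wtSlash k (mkGLPos !![(1/2:ℝ),0;0,1]
      (by norm_num [Matrix.det_fin_two_of])) f τ from rfl, wtSlash_apply_tri]
  rw [show mkGLPos !![(1/2:ℝ),0;0,1] (by norm_num [Matrix.det_fin_two_of]) • τ = Dinv • τ from rfl,
    Dinv_smul]
  simp only [Pi.smul_apply, smul_eq_mul, cDinv]
  norm_num

lemma smul_cancel {c : ℂ} (hc : c ≠ 0) {x y : ℍ → ℂ} (h : c • x = c • y) : x = y := by
  funext τ
  have h2 := congrFun h τ
  simp only [Pi.smul_apply, smul_eq_mul] at h2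
  exact mul_left_cancel₀ hc h2

lemma toGL_mul (γ₁ γ₂ : SL(2,ℤ)) : toGL (γ₁ * γ₂) = toGL γ₁ * toGL γ₂ := by
  unfold toGL
  rw [_root_.map_mul, _root_.map_mul]

lemma toGL_one : toGL 1 = 1 := by
  unfold toGL
  rw [_root_.map_one, _root_.map_one]

-- matrix relations
lemma relR1 : Dg * W4 = twoI * toGL S * Dg := by
  apply glpos_ext
  rw [mat_mul, mat_mul, mat_mul, mat_toGL, coe_S]
  ext i j
  fin_cases i <;> fin_cases j <;>
    simp [Dg, W4, twoI, Matrix.mul_apply, Matrix.vecMul, dotProduct, Fin.sum_univ_two, Matrix.map_apply] <;> norm_num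

lemma relR2 : Dg * Thalf = toGL T * Dg := by
  apply glpos_ext
  rw [mat_mul, mat_mul, mat_toGL, coe_T]
  ext i j
  fin_cases i <;> fin_cases j <;>
    simp [Dg, Thalf, Matrix.mul_apply, Matrix.vecMul, dotProduct, Fin.sum_univ_two, Matrix.map_apply] <;> norm_num

lemma relR3 : Dinv * toGL T = Thalf * Dinv := by
  apply glpos_ext
  rw [mat_mul, mat_mul, mat_toGL, coe_T]
  ext i j
  fin_cases i <;> fin_cases j <;>
    simp [Dinv, Thalf, Matrix.mul_apply, Matrix.vecMul, dotProduct, Fin.sum_univ_two, Matrix.map_apply] <;> norm_num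

lemma relR4 : Dinv * toGL S = halfI * (W4 * Dinv) := by
  apply glpos_ext
  rw [mat_mul, mat_mul, mat_mul, mat_toGL, coe_S]
  ext i j
  fin_cases i <;> fin_cases j <;>
    simp [Dinv, W4, halfI, Matrix.mul_apply, Matrix.vecMul, dotProduct, Fin.sum_univ_two, Matrix.map_apply] <;> norm_num

lemma zmod2_mul_eq_one : ∀ x y : ZMod 2, x * y = 1 → x = 1 ∧ y = 1 := by decide

lemma gamma0_conj (γ : SL(2,ℤ)) (hγ : γ ∈ Gamma0 4) :
    ∃ γ' : SL(2,ℤ), γ' ∈ Gamma 2 ∧ Dg * toGL γ = toGL γ' * Dg := by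
  have hdet : γ 0 0 * γ 1 1 - γ 0 1 * γ 1 0 = 1 := by
    have h2 := γ.2
    rwa [Matrix.det_fin_two] at h2
  have h4 : (4:ℤ) ∣ γ 1 0 := by
    have hm := (Gamma0_mem).mp hγ
    exact_mod_cast (ZMod.intCast_zmod_eq_zero_iff_dvd (γ 1 0) 4).mp hm
  obtain ⟨c', hc'⟩ := h4
  have hdet' : γ 0 0 * γ 1 1 - 2 * γ 0 1 * (2 * c') = 1 := by
    rw [hc'] at hdet; linarith [hdet]
  refine ⟨⟨!![γ 0 0, 2 * γ 0 1; 2 * c', γ 1 1], by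
    rw [Matrix.det_fin_two_of]; linarith [hdet']⟩, ?_, ?_⟩
  · refine Gamma_mem.mpr ?_
    have had : ((γ 0 0 : ZMod 2)) * ((γ 1 1 : ZMod 2)) = 1 := by
      have := congrArg (fun n : ℤ => (n : ZMod 2)) hdet'
      push_cast at this
      rw [show ((2:ZMod 2)) = 0 by decide] at this
      simpa using this
    obtain ⟨ha, hd⟩ := zmod2_mul_eq_one _ _ had
    refine ⟨ha, ?_, ?_, hd⟩
    · show (((2 * γ 0 1 : ℤ)) : ZMod 2) = 0
      push_cast
      rw [show ((2:ZMod 2)) = 0 by decide]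
      ring
    · show (((2 * c' : ℤ)) : ZMod 2) = 0
      push_cast
      rw [show ((2:ZMod 2)) = 0 by decide]
      ring
  · apply glpos_ext
    rw [mat_mul, mat_mul, mat_toGL]; erw [mat_toGL]
    ext i j
    fin_cases i <;> fin_cases j <;>
      simp [Dg, Matrix.mul_apply, Matrix.vecMul, dotProduct, Fin.sum_univ_two, Matrix.map_apply] <;>
      push_cast [hc'] <;> ring

lemma gamma2_conj (γ : SL(2,ℤ)) (hγ : γ ∈ Gamma 2) :
    ∃ γ' : SL(2,ℤ), γ' ∈ Gamma0 4 ∧ Dinv * toGL γ = toGL γ' * Dinv := by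
  have hdet : γ 0 0 * γ 1 1 - γ 0 1 * γ 1 0 = 1 := by
    have h2 := γ.2
    rwa [Matrix.det_fin_two] at h2
  obtain ⟨h00, h01, h10, h11⟩ := Gamma_mem.mp hγ
  have hdvd : (2:ℤ) ∣ γ 0 1 := by
    exact_mod_cast (ZMod.intCast_zmod_eq_zero_iff_dvd (γ 0 1) 2).mp h01
  obtain ⟨b', hb'⟩ := hdvd
  have hdet' : γ 0 0 * γ 1 1 - b' * (2 * γ 1 0) = 1 := by
    rw [hb'] at hdet; linarith [hdet]
  refine ⟨⟨!![γ 0 0, b'; 2 * γ 1 0, γ 1 1], by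
    rw [Matrix.det_fin_two_of]; linarith [hdet']⟩, ?_, ?_⟩
  · refine Gamma0_mem.mpr ?_
    have hdvd2 : (2:ℤ) ∣ γ 1 0 := by
      exact_mod_cast (ZMod.intCast_zmod_eq_zero_iff_dvd (γ 1 0) 2).mp h10
    obtain ⟨c', hc'⟩ := hdvd2
    show (((!![γ 0 0, b'; 2 * γ 1 0, γ 1 1] : Matrix (Fin 2) (Fin 2) ℤ) 1 0 : ZMod 4)) = 0
    rw [show (!![γ 0 0, b'; 2 * γ 1 0, γ 1 1] : Matrix (Fin 2) (Fin 2) ℤ) 1 0 = 2 * γ 1 0 by simp]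
    rw [hc']
    push_cast
    ring_nf
    simp [show ((4:ZMod 4)) = 0 by decide]
  · apply glpos_ext
    rw [mat_mul, mat_mul, mat_toGL]; erw [mat_toGL]
    ext i j
    fin_cases i <;> fin_cases j <;>
      simp [Dinv, Matrix.mul_apply, Matrix.vecMul, dotProduct, Fin.sum_univ_two, Matrix.map_apply] <;>
      push_cast [hb'] <;> ring

lemma det_map_cast (M : Matrix (Fin 2) (Fin 2) ℤ) :
    (M.map ((↑) : ℤ → ℝ)).det = ((M.det : ℤ) : ℝ) := by
  rw [show (((↑) : ℤ → ℝ)) = ⇑(Int.castRingHom ℝ) from rfl]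
  exact (RingHom.map_det (Int.castRingHom ℝ) M).symm

lemma map_cast_mul (M N : Matrix (Fin 2) (Fin 2) ℤ) :
    (M * N).map ((↑) : ℤ → ℝ) = M.map ((↑) : ℤ → ℝ) * N.map ((↑) : ℤ → ℝ) := by
  rw [show (((↑) : ℤ → ℝ)) = ⇑(Int.castRingHom ℝ) from rfl]
  exact Matrix.map_mul (L := M) (M := N) (f := Int.castRingHom ℝ)

lemma wtSlash_neg (k : ℤ) (A : GL(2, ℝ)⁺) (f : ℍ → ℂ) :
    wtSlash k A (-f) = -(wtSlash k A f) := by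
  have h := wtSlash_smul k A (-1 : ℂ) f
  rw [neg_one_smul] at h
  rw [h, neg_one_smul]

lemma isZero_smul (c : ℂ) {h : ℍ → ℂ} (hz : IsZeroAtImInfty h) :
    IsZeroAtImInfty (c • h) := by
  have h2 := hz.const_mul c
  rw [mul_zero] at h2
  exact h2.congr fun τ => rfl

lemma slash_eq_of_wtSlash {k : ℤ} {h : ℍ → ℂ} (γ : SL(2,ℤ))
    (hw : wtSlash k (toGL γ) h = h) : h ∣[k] γ = h := by
  rw [← wtSlash_SL k γ h, hw]

/-- Forward: `τ ↦ f (2τ)` is a cusp form for `Γ₀(4)`. -/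
def fwdForm {k : ℤ} (f : CuspForm (Gamma 2) k) : CuspForm (Gamma0 4) k where
  toFun := fun τ => f (double τ)
  slash_action_eq' := by
    intro _ hγ'
    obtain ⟨γ, hγ, rfl⟩ := Subgroup.mem_map.mp hγ'
    refine (ModularForm.SL_slash (k := k) _ γ).symm.trans (slash_eq_of_wtSlash γ ?_)
    have key : wtSlash k (toGL γ) (wtSlash k Dg ⇑f) = wtSlash k Dg ⇑f := by
      obtain ⟨γ', hmem, hrel⟩ := gamma0_conj γ hγ
      rw [← wtSlash_mul, hrel, wtSlash_mul, wtSlash_SL, show ⇑f ∣[k] γ' = ⇑f from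
        SlashInvariantForm.slash_action_eqn f _ (Subgroup.mem_map_of_mem _ hmem)]
    rw [wtSlash_Dg, wtSlash_smul] at key
    exact smul_cancel (cD_ne_zero k) key
  holo' := mdiff_double f.holo'
  zero_at_cusps' := by
    intro c hc
    rw [Subgroup.IsArithmetic.isCusp_iff_isCusp_SL2Z] at hc
    rw [OnePoint.isZeroAt_iff_forall_SL2Z hc]
    intro A _
    have hdetZ : (!![2, 0; 0, 1] * (A : Matrix (Fin 2) (Fin 2) ℤ)).det = 2 := by
      rw [Matrix.det_mul, Matrix.SpecialLinearGroup.det_coe, Matrix.det_fin_two_of]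
      norm_num
    have hpos : 0 < ((!![2, 0; 0, 1] * (A : Matrix (Fin 2) (Fin 2) ℤ)).map ((↑) : ℤ → ℝ)).det := by
      rw [det_map_cast, hdetZ]
      norm_num
    have hfac : Dg * toGL A
        = mkGLPos ((!![2, 0; 0, 1] * (A : Matrix (Fin 2) (Fin 2) ℤ)).map ((↑) : ℤ → ℝ)) hpos := by
      apply glpos_ext
      rw [mat_mul, mat_toGL, mat_mkGLPos,
        map_cast_mul _ _]
      congr 1
      ext i j
      fin_cases i <;> fin_cases j <;> simp [Dg, Matrix.map_apply]
    have h1 : (fun τ => f (double τ)) = (cD k)⁻¹ • wtSlash k Dg ⇑f := by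
      rw [wtSlash_Dg, smul_smul, inv_mul_cancel₀ (cD_ne_zero k), one_smul]
    show IsZeroAtImInfty ((fun τ => f (double τ)) ∣[k] A)
    rw [h1, ModularForm.SL_smul_slash]
    apply isZero_smul
    rw [← wtSlash_SL, ← wtSlash_mul, hfac]
    exact zeroAt_wtSlash_int f _ hdetZ hpos

lemma fwdForm_coe {k : ℤ} (f : CuspForm (Gamma 2) k) :
    ⇑(fwdForm f) = fun τ => f (double τ) := rfl

/-- Backward: `τ ↦ g (τ/2)` is a cusp form for `Γ(2)`. -/
def bwdForm {k : ℤ} (g : CuspForm (Gamma0 4) k) : CuspForm (Gamma 2) k where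
  toFun := fun τ => g (halfH τ)
  slash_action_eq' := by
    intro _ hγ'
    obtain ⟨γ, hγ, rfl⟩ := Subgroup.mem_map.mp hγ'
    refine (ModularForm.SL_slash (k := k) _ γ).symm.trans (slash_eq_of_wtSlash γ ?_)
    have key : wtSlash k (toGL γ) (wtSlash k Dinv ⇑g) = wtSlash k Dinv ⇑g := by
      obtain ⟨γ', hmem, hrel⟩ := gamma2_conj γ hγ
      rw [← wtSlash_mul, hrel, wtSlash_mul, wtSlash_SL, show ⇑g ∣[k] γ' = ⇑g from
        SlashInvariantForm.slash_action_eqn g _ (Subgroup.mem_map_of_mem _ hmem)]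
    rw [wtSlash_Dinv, wtSlash_smul] at key
    exact smul_cancel (cDinv_ne_zero k) key
  holo' := mdiff_half g.holo'
  zero_at_cusps' := by
    intro c hc
    rw [Subgroup.IsArithmetic.isCusp_iff_isCusp_SL2Z] at hc
    rw [OnePoint.isZeroAt_iff_forall_SL2Z hc]
    intro A _
    have hdetZ : (!![1, 0; 0, 2] * (A : Matrix (Fin 2) (Fin 2) ℤ)).det = 2 := by
      rw [Matrix.det_mul, Matrix.SpecialLinearGroup.det_coe, Matrix.det_fin_two_of]
      norm_num
    have hpos : 0 < ((!![1, 0; 0, 2] * (A : Matrix (Fin 2) (Fin 2) ℤ)).map ((↑) : ℤ → ℝ)).det := by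
      rw [det_map_cast, hdetZ]
      norm_num
    have hfac : twoI * (Dinv * toGL A)
        = mkGLPos ((!![1, 0; 0, 2] * (A : Matrix (Fin 2) (Fin 2) ℤ)).map ((↑) : ℤ → ℝ)) hpos := by
      apply glpos_ext
      rw [mat_mul, mat_mul, mat_toGL, mat_mkGLPos,
        map_cast_mul _ _]
      rw [← Matrix.mul_assoc]
      congr 1
      ext i j
      fin_cases i <;> fin_cases j <;> simp [twoI, Dinv, Matrix.mul_apply, Matrix.vecMul,
        dotProduct, Fin.sum_univ_two, Matrix.map_apply] <;> norm_num
    have h1 : (fun τ => g (halfH τ)) = (cDinv k)⁻¹ • wtSlash k Dinv ⇑g := by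
      rw [wtSlash_Dinv, smul_smul, inv_mul_cancel₀ (cDinv_ne_zero k), one_smul]
    show IsZeroAtImInfty ((fun τ => g (halfH τ)) ∣[k] A)
    rw [h1, ModularForm.SL_smul_slash]
    apply isZero_smul
    rw [← wtSlash_SL, ← wtSlash_mul]
    have h2 : wtSlash k (twoI * (Dinv * toGL A)) ⇑g
        = wtSlash k (Dinv * toGL A) ⇑g := by
      rw [wtSlash_mul, wtSlash_twoI]
    rw [← h2, hfac]
    exact zeroAt_wtSlash_int g _ hdetZ hpos

lemma bwdForm_coe {k : ℤ} (g : CuspForm (Gamma0 4) k) :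
    ⇑(bwdForm g) = fun τ => g (halfH τ) := rfl

lemma fwd_W4 {k : ℤ} (f : CuspForm (Gamma 2) k)
    (hfS : wtSlash k (toGL S) ⇑f = -⇑f) :
    wtSlash k W4 ⇑(fwdForm f) = -⇑(fwdForm f) := by
  apply smul_cancel (cD_ne_zero k)
  rw [fwdForm_coe]
  calc cD k • wtSlash k W4 (fun τ => f (double τ))
      = wtSlash k W4 (cD k • fun τ => f (double τ)) := (wtSlash_smul _ _ _ _).symm
    _ = wtSlash k W4 (wtSlash k Dg ⇑f) := by rw [← wtSlash_Dg]
    _ = wtSlash k (Dg * W4) ⇑f := (wtSlash_mul _ _ _ _).symm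
    _ = wtSlash k (twoI * toGL S * Dg) ⇑f := by rw [relR1]
    _ = wtSlash k Dg (wtSlash k (twoI * toGL S) ⇑f) := wtSlash_mul _ _ _ _
    _ = wtSlash k Dg (wtSlash k (toGL S) (wtSlash k twoI ⇑f)) := by rw [wtSlash_mul]
    _ = wtSlash k Dg (-⇑f) := by rw [wtSlash_twoI, hfS]
    _ = -(wtSlash k Dg ⇑f) := wtSlash_neg _ _ _
    _ = cD k • -fun τ => f (double τ) := by rw [wtSlash_Dg, smul_neg]

lemma fwd_Thalf {k : ℤ} (f : CuspForm (Gamma 2) k)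
    (hfT : wtSlash k (toGL T) ⇑f = -⇑f) :
    wtSlash k Thalf ⇑(fwdForm f) = -⇑(fwdForm f) := by
  apply smul_cancel (cD_ne_zero k)
  rw [fwdForm_coe]
  calc cD k • wtSlash k Thalf (fun τ => f (double τ))
      = wtSlash k Thalf (cD k • fun τ => f (double τ)) := (wtSlash_smul _ _ _ _).symm
    _ = wtSlash k Thalf (wtSlash k Dg ⇑f) := by rw [← wtSlash_Dg]
    _ = wtSlash k (Dg * Thalf) ⇑f := (wtSlash_mul _ _ _ _).symm
    _ = wtSlash k (toGL T * Dg) ⇑f := by rw [relR2]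
    _ = wtSlash k Dg (wtSlash k (toGL T) ⇑f) := wtSlash_mul _ _ _ _
    _ = wtSlash k Dg (-⇑f) := by rw [hfT]
    _ = -(wtSlash k Dg ⇑f) := wtSlash_neg _ _ _
    _ = cD k • -fun τ => f (double τ) := by rw [wtSlash_Dg, smul_neg]

lemma bwd_S {k : ℤ} (g : CuspForm (Gamma0 4) k)
    (hg1 : wtSlash k W4 ⇑g = -⇑g) :
    wtSlash k (toGL S) ⇑(bwdForm g) = -⇑(bwdForm g) := by
  apply smul_cancel (cDinv_ne_zero k)
  rw [bwdForm_coe]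
  calc cDinv k • wtSlash k (toGL S) (fun τ => g (halfH τ))
      = wtSlash k (toGL S) (cDinv k • fun τ => g (halfH τ)) := (wtSlash_smul _ _ _ _).symm
    _ = wtSlash k (toGL S) (wtSlash k Dinv ⇑g) := by rw [← wtSlash_Dinv]
    _ = wtSlash k (Dinv * toGL S) ⇑g := (wtSlash_mul _ _ _ _).symm
    _ = wtSlash k (halfI * (W4 * Dinv)) ⇑g := by rw [relR4]
    _ = wtSlash k (W4 * Dinv) (wtSlash k halfI ⇑g) := wtSlash_mul _ _ _ _
    _ = wtSlash k (W4 * Dinv) ⇑g := by rw [wtSlash_halfI]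
    _ = wtSlash k Dinv (wtSlash k W4 ⇑g) := wtSlash_mul _ _ _ _
    _ = wtSlash k Dinv (-⇑g) := by rw [hg1]
    _ = -(wtSlash k Dinv ⇑g) := wtSlash_neg _ _ _
    _ = cDinv k • -fun τ => g (halfH τ) := by rw [wtSlash_Dinv, smul_neg]

lemma bwd_T {k : ℤ} (g : CuspForm (Gamma0 4) k)
    (hg2 : wtSlash k Thalf ⇑g = -⇑g) :
    wtSlash k (toGL T) ⇑(bwdForm g) = -⇑(bwdForm g) := by
  apply smul_cancel (cDinv_ne_zero k)
  rw [bwdForm_coe]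
  calc cDinv k • wtSlash k (toGL T) (fun τ => g (halfH τ))
      = wtSlash k (toGL T) (cDinv k • fun τ => g (halfH τ)) := (wtSlash_smul _ _ _ _).symm
    _ = wtSlash k (toGL T) (wtSlash k Dinv ⇑g) := by rw [← wtSlash_Dinv]
    _ = wtSlash k (Dinv * toGL T) ⇑g := (wtSlash_mul _ _ _ _).symm
    _ = wtSlash k (Thalf * Dinv) ⇑g := by rw [relR3]
    _ = wtSlash k Dinv (wtSlash k Thalf ⇑g) := wtSlash_mul _ _ _ _
    _ = wtSlash k Dinv (-⇑g) := by rw [hg2]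
    _ = -(wtSlash k Dinv ⇑g) := wtSlash_neg _ _ _
    _ = cDinv k • -fun τ => g (halfH τ) := by rw [wtSlash_Dinv, smul_neg]

lemma chi_transform {k : ℤ} (χ : SL(2, ℤ) →* ℂˣ)
    (hS : (χ S : ℂ) = -1) (hT : (χ T : ℂ) = -1)
    (h : ℍ → ℂ)
    (hhS : wtSlash k (toGL S) h = -h) (hhT : wtSlash k (toGL T) h = -h) :
    ∀ γ : SL(2, ℤ), wtSlash k (toGL γ) h = (χ γ : ℂ) • h := by
  set H : Subgroup SL(2, ℤ) :=
    { carrier := {γ | wtSlash k (toGL γ) h = (χ γ : ℂ) • h}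
      one_mem' := by
        show wtSlash k (toGL 1) h = (χ 1 : ℂ) • h
        rw [toGL_one, wtSlash_one, _root_.map_one]
        simp
      mul_mem' := by
        intro a b ha hb
        show wtSlash k (toGL (a * b)) h = (χ (a * b) : ℂ) • h
        rw [toGL_mul, wtSlash_mul, ha, wtSlash_smul, hb, smul_smul, _root_.map_mul,
          Units.val_mul]
      inv_mem' := by
        intro a ha
        show wtSlash k (toGL a⁻¹) h = (χ a⁻¹ : ℂ) • h
        have h1 : wtSlash k (toGL (a * a⁻¹)) h = h := by
          rw [mul_inv_cancel, toGL_one, wtSlash_one]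
        rw [toGL_mul, wtSlash_mul, ha, wtSlash_smul] at h1
        have hu : ((χ a : ℂ)) ≠ 0 := Units.ne_zero (χ a)
        rw [_root_.map_inv]
        calc wtSlash k (toGL a⁻¹) h
            = (χ a : ℂ)⁻¹ • ((χ a : ℂ) • wtSlash k (toGL a⁻¹) h) := by
              rw [smul_smul, inv_mul_cancel₀ hu, one_smul]
          _ = (χ a : ℂ)⁻¹ • h := by rw [h1]
          _ = ((χ a)⁻¹ : ℂˣ) • h := by norm_cast
      } with hH
  intro γ
  have hmem : γ ∈ H := by
    have hle : Subgroup.closure ({S, T} : Set SL(2,ℤ)) ≤ H := by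
      rw [Subgroup.closure_le]
      rintro x hx
      rcases hx with rfl | rfl
      · show wtSlash k (toGL S) h = (χ S : ℂ) • h
        rw [hhS, hS, neg_one_smul]
      · show wtSlash k (toGL T) h = (χ T : ℂ) • h
        rw [hhT, hT, neg_one_smul]
    exact hle (mem_closure_S_T γ)
  exact hmem

end Aux

/-- The space of cusp forms of weight `k` for `Γ(2)` transforming under `SL(2,ℤ)` by the
character `χ`. -/
def chiSpace (k : ℤ) (χ : SL(2, ℤ) →* ℂˣ) : Submodule ℂ (CuspForm (Gamma 2) k) where
  carrier := {f | ∀ γ : SL(2, ℤ), wtSlash k (toGL γ) ⇑f = (χ γ : ℂ) • ⇑f}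
  add_mem' := by
    intro f g hf hg γ
    rw [CuspForm.coe_add, wtSlash_add, hf γ, hg γ, smul_add]
  zero_mem' := by
    intro γ
    rw [CuspForm.coe_zero, wtSlash_zero, smul_zero]
  smul_mem' := by
    intro c f hf γ
    rw [CuspForm.coe_smul, wtSlash_smul, hf γ, smul_comm]

/-- The space of cusp forms of weight `k` for `Γ₀(4)` with eigenvalue `-1` under both the
Fricke involution `W₄` and the operator `T_{1/2}`. -/
def minusSpace (k : ℤ) : Submodule ℂ (CuspForm (Gamma0 4) k) where
  carrier := {g | wtSlash k W4 ⇑g = -⇑g ∧ wtSlash k Thalf ⇑g = -⇑g}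
  add_mem' := by
    intro f g hf hg
    refine ⟨?_, ?_⟩
    · rw [CuspForm.coe_add, wtSlash_add, hf.1, hg.1]; abel
    · rw [CuspForm.coe_add, wtSlash_add, hf.2, hg.2]; abel
  zero_mem' := by
    refine ⟨?_, ?_⟩ <;> rw [CuspForm.coe_zero, wtSlash_zero] <;> simp
  smul_mem' := by
    intro c f hf
    refine ⟨?_, ?_⟩
    · rw [CuspForm.coe_smul, wtSlash_smul, hf.1]; simp
    · rw [CuspForm.coe_smul, wtSlash_smul, hf.2]; simp

/-- the map `f ↦ (τ ↦ f(2τ))` is a `ℂ`-linear bijection from the space of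
cusp forms of weight `k` for `Γ(2)` transforming by `χ` under `SL(2,ℤ)` onto the space of
cusp forms of weight `k` for `Γ₀(4)` on which `W₄` and `T_{1/2}` act by `-1`. -/
theorem chiSpace_linear_equiv_minusSpace (k : ℤ) (hk : 0 < k) (hke : Even k)
    (χ : SL(2, ℤ) →* ℂˣ) (hS : (χ ModularGroup.S : ℂ) = -1)
    (hT : (χ ModularGroup.T : ℂ) = -1) :
    ∃ e : chiSpace k χ ≃ₗ[ℂ] minusSpace k,
      ∀ (f : chiSpace k χ) (τ : ℍ),
        ((e f : CuspForm (Gamma0 4) k) : ℍ → ℂ) τ = ((f : CuspForm (Gamma 2) k) : ℍ → ℂ) (double τ) := by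
  classical
  have memMinus : ∀ f : chiSpace k χ, (Aux.fwdForm (f : CuspForm (Gamma 2) k)) ∈ minusSpace k := by
    intro f
    constructor
    · refine Aux.fwd_W4 _ ?_
      have h := f.2 ModularGroup.S
      rwa [hS, neg_one_smul] at h
    · refine Aux.fwd_Thalf _ ?_
      have h := f.2 ModularGroup.T
      rwa [hT, neg_one_smul] at h
  have memChi : ∀ g : minusSpace k, ∀ γ : SL(2, ℤ),
      wtSlash k (toGL γ) ⇑(Aux.bwdForm (g : CuspForm (Gamma0 4) k))
        = (χ γ : ℂ) • ⇑(Aux.bwdForm (g : CuspForm (Gamma0 4) k)) := fun g =>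
    Aux.chi_transform χ hS hT _ (Aux.bwd_S _ g.2.1) (Aux.bwd_T _ g.2.2)
  let Φ : chiSpace k χ →ₗ[ℂ] minusSpace k :=
    { toFun := fun f => ⟨Aux.fwdForm (f : CuspForm (Gamma 2) k), memMinus f⟩
      map_add' := by
        intro f g
        apply Subtype.ext
        apply DFunLike.ext
        intro τ
        show (⇑((f : CuspForm (Gamma 2) k) + (g : CuspForm (Gamma 2) k))) (double τ)
            = (⇑(Aux.fwdForm (f : CuspForm (Gamma 2) k)
              + Aux.fwdForm (g : CuspForm (Gamma 2) k))) τ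
        rw [CuspForm.coe_add, CuspForm.coe_add]
        rfl
      map_smul' := by
        intro c f
        apply Subtype.ext
        apply DFunLike.ext
        intro τ
        show (⇑(c • (f : CuspForm (Gamma 2) k))) (double τ)
            = (⇑(c • Aux.fwdForm (f : CuspForm (Gamma 2) k))) τ
        rw [CuspForm.coe_smul, CuspForm.coe_smul]
        rfl }
  let Ψ : minusSpace k →ₗ[ℂ] chiSpace k χ :=
    { toFun := fun g => ⟨Aux.bwdForm (g : CuspForm (Gamma0 4) k), memChi g⟩
      map_add' := by
        intro f g
        apply Subtype.ext
        apply DFunLike.ext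
        intro τ
        show (⇑((f : CuspForm (Gamma0 4) k) + (g : CuspForm (Gamma0 4) k))) (Aux.halfH τ)
            = (⇑(Aux.bwdForm (f : CuspForm (Gamma0 4) k)
              + Aux.bwdForm (g : CuspForm (Gamma0 4) k))) τ
        rw [CuspForm.coe_add, CuspForm.coe_add]
        rfl
      map_smul' := by
        intro c f
        apply Subtype.ext
        apply DFunLike.ext
        intro τ
        show (⇑(c • (f : CuspForm (Gamma0 4) k))) (Aux.halfH τ)
            = (⇑(c • Aux.bwdForm (f : CuspForm (Gamma0 4) k))) τ
        rw [CuspForm.coe_smul, CuspForm.coe_smul]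
        rfl }
  have hdh : ∀ τ : ℍ, Aux.halfH (double τ) = τ := by
    intro τ
    apply UpperHalfPlane.ext
    show (2 * (τ : ℂ)) / 2 = (τ : ℂ)
    ring
  have hhd : ∀ τ : ℍ, double (Aux.halfH τ) = τ := by
    intro τ
    apply UpperHalfPlane.ext
    show 2 * ((τ : ℂ) / 2) = (τ : ℂ)
    ring
  refine ⟨LinearEquiv.ofLinear Φ Ψ ?_ ?_, ?_⟩
  · apply LinearMap.ext
    intro g
    apply Subtype.ext
    apply DFunLike.ext
    intro τ
    show (g : CuspForm (Gamma0 4) k) (Aux.halfH (double τ)) = (g : CuspForm (Gamma0 4) k) τ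
    rw [hdh]
  · apply LinearMap.ext
    intro f
    apply Subtype.ext
    apply DFunLike.ext
    intro τ
    show (f : CuspForm (Gamma 2) k) (double (Aux.halfH τ)) = (f : CuspForm (Gamma 2) k) τ
    rw [hhd]
  · intro f τ
    rfl

end
end

section
/- There exists a nonzero cusp form f of weight 6 for Γ(2) satisfying f∣[6]γ = χ(γ)·f for all γ ∈ SL(2,ℤ), where χ is the unique group homomorphism SL(2,ℤ) → ℂˣ with χ(S) = χ(T) = -1. Equivalently, there exists a nonzero cusp form f of weight 6 for Γ(2) with f∣[6]S = -f and f∣[6]T = -f. -/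
open UpperHalfPlane Matrix MatrixGroups CongruenceSubgroup

noncomputable section

open Complex Real ModularGroup



lemma theta_shift (z τ : ℂ) : jacobiTheta₂ z (τ + 1) = jacobiTheta₂ (z + 1/2) τ := by
  unfold jacobiTheta₂
  refine tsum_congr fun n => ?_
  unfold jacobiTheta₂_term
  obtain ⟨k, hk⟩ : Even (n^2 - n) := by
    have h := Int.even_mul_succ_self (n - 1)
    have : (n - 1) * (n - 1 + 1) = n^2 - n := by ring
    rwa [this] at h
  have hk' : (n:ℂ)^2 - n = 2 * k := by
    have h2 : ((n^2 - n : ℤ) : ℂ) = ((k + k : ℤ) : ℂ) := by rw [hk]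
    push_cast at h2; rw [two_mul]; exact h2
  rw [Complex.exp_eq_exp_iff_exists_int]
  exact ⟨k, by linear_combination (π : ℂ) * Complex.I * hk'⟩


/-- η^{12} up to a constant: `e^{πiτ} (θ-triple-product)⁴`. -/
def thetaProd (τ : ℂ) : ℂ :=
  cexp (π*Complex.I*τ) * jacobiTheta₂ (τ/2) τ ^ 4 * jacobiTheta₂ 0 τ ^ 4 * jacobiTheta₂ (1/2) τ ^ 4

lemma thetaProd_T (τ : ℂ) : thetaProd (τ + 1) = -thetaProd τ := by
  have h1 : jacobiTheta₂ ((τ+1)/2) (τ+1) = jacobiTheta₂ (τ/2) τ := by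
    rw [theta_shift, show (τ+1)/2 + 1/2 = τ/2 + 1 by ring, jacobiTheta₂_add_left]
  have h2 : jacobiTheta₂ 0 (τ+1) = jacobiTheta₂ (1/2) τ := by
    rw [theta_shift, zero_add]
  have h3 : jacobiTheta₂ (1/2) (τ+1) = jacobiTheta₂ 0 τ := by
    rw [theta_shift, show (1:ℂ)/2 + 1/2 = 0 + 1 by ring, jacobiTheta₂_add_left]
  have h4 : cexp (π*Complex.I*(τ+1)) = -cexp (π*Complex.I*τ) := by
    rw [mul_add, mul_one, Complex.exp_add, Complex.exp_pi_mul_I]; ring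
  rw [thetaProd, h1, h2, h3, h4, thetaProd]; ring

lemma thetaProd_S {τ : ℂ} (hτ : 0 < τ.im) : thetaProd (-1/τ) = -τ^6 * thetaProd τ := by
  have hτ0 : τ ≠ 0 := fun h => by simp [h] at hτ
  set w : ℂ := (-Complex.I*τ) ^ (1/2 : ℂ) with hw
  have hIτ : -Complex.I*τ ≠ 0 := by simp [hτ0, Complex.I_ne_zero]
  have hw2 : w * w = -Complex.I*τ := by
    rw [hw, ← Complex.cpow_add _ _ hIτ]; norm_num
  have hwne : w ≠ 0 := by
    intro h; rw [h, mul_zero] at hw2; exact hIτ hw2.symm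
  have FE := fun z => jacobiTheta₂_functional_equation z τ
  have ha : jacobiTheta₂ 0 (-1/τ) = w * jacobiTheta₂ 0 τ := by
    have h := FE 0
    rw [← hw] at h
    norm_num at h
    rw [h]
    field_simp
  have hbe : cexp (π*Complex.I*τ/4) * cexp (-↑π * Complex.I * (τ / 2) ^ 2 / τ) = 1 := by
    rw [← Complex.exp_add, ← Complex.exp_zero]
    congr 1
    field_simp
    ring
  have hb : jacobiTheta₂ (1/2) (-1/τ) = w * cexp (π*Complex.I*τ/4) * jacobiTheta₂ (τ/2) τ := by
    have h := FE (τ/2)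
    rw [← hw, show (τ/2)/τ = 1/2 by field_simp] at h
    rw [h, show w * cexp (π*Complex.I*τ/4) * (1 / w * cexp (-↑π * Complex.I * (τ / 2) ^ 2 / τ) *
        jacobiTheta₂ (1/2) (-1/τ)) = (w * (1/w)) * (cexp (π*Complex.I*τ/4) *
        cexp (-↑π * Complex.I * (τ / 2) ^ 2 / τ)) * jacobiTheta₂ (1/2) (-1/τ) by ring,
      mul_one_div_cancel hwne, hbe, one_mul, one_mul]
  have hce : cexp (π*Complex.I/(4*τ)) * cexp (-↑π * Complex.I * ((1:ℂ)/2) ^ 2 / τ) = 1 := by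
    rw [← Complex.exp_add, ← Complex.exp_zero]
    congr 1
    field_simp
    simp only [Complex.exp_zero]; ring
  have hc : jacobiTheta₂ ((-1/τ)/2) (-1/τ) = w * cexp (π*Complex.I/(4*τ)) * jacobiTheta₂ (1/2) τ := by
    have h := FE (1/2)
    rw [← hw, show ((1:ℂ)/2)/τ = 1/(2*τ) by field_simp] at h
    rw [show (-1/τ)/2 = -(1/(2*τ)) by ring, jacobiTheta₂_neg_left, h,
      show w * cexp (π*Complex.I/(4*τ)) * (1 / w * cexp (-↑π * Complex.I * ((1:ℂ) / 2) ^ 2 / τ) *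
        jacobiTheta₂ (1/(2*τ)) (-1/τ)) = (w * (1/w)) * (cexp (π*Complex.I/(4*τ)) *
        cexp (-↑π * Complex.I * ((1:ℂ) / 2) ^ 2 / τ)) * jacobiTheta₂ (1/(2*τ)) (-1/τ) by ring,
      mul_one_div_cancel hwne, hce, one_mul, one_mul]
  have hexp : cexp (π*Complex.I*(-1/τ)) * cexp (π*Complex.I/(4*τ)) ^ 4 = 1 := by
    rw [show (4:ℕ) = 4 from rfl, ← Complex.exp_nat_mul, ← Complex.exp_add, ← Complex.exp_zero]
    congr 1
    field_simp
    simp only [Complex.exp_zero]; ring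
  have hw12 : (w*w)^6 = -τ^6 := by
    rw [hw2, show (-Complex.I*τ)^6 = (Complex.I^2)^3 * τ^6 by ring, Complex.I_sq]
    ring
  rw [thetaProd, ha, hb, hc, thetaProd]
  rw [show cexp (↑π * Complex.I * (-1 / τ)) * (w * cexp (↑π * Complex.I / (4 * τ)) * jacobiTheta₂ (1 / 2) τ) ^ 4 *
      (w * jacobiTheta₂ 0 τ) ^ 4 * (w * cexp (↑π * Complex.I * τ / 4) * jacobiTheta₂ (τ / 2) τ) ^ 4
      = (cexp (π*Complex.I*(-1/τ)) * cexp (π*Complex.I/(4*τ))^4) * (w*w)^6 * (cexp (↑π * Complex.I * τ / 4))^4 *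
        jacobiTheta₂ (τ/2) τ ^ 4 * jacobiTheta₂ 0 τ ^4 * jacobiTheta₂ (1/2) τ ^ 4 by ring,
    hexp, hw12, show (4:ℕ) = 4 from rfl, ← Complex.exp_nat_mul]
  rw [show ((4:ℕ):ℂ) * (π*Complex.I*τ/4) = π*Complex.I*τ by push_cast; ring]
  ring



lemma thetaProd_diff {z : ℂ} (hz : 0 < z.im) : DifferentiableAt ℂ thetaProd z := by
  have hj : DifferentiableAt ℂ (fun p : ℂ × ℂ => jacobiTheta₂ p.1 p.2) (z/2, z) :=
    (hasFDerivAt_jacobiTheta₂ (z/2) hz).differentiableAt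
  have hp : DifferentiableAt ℂ (fun τ : ℂ => ((τ/2 : ℂ), τ)) z :=
    DifferentiableAt.prodMk (differentiableAt_id.div_const (2:ℂ)) differentiableAt_id
  have h1 : DifferentiableAt ℂ (fun τ => jacobiTheta₂ (τ/2) τ) z := by
    have := DifferentiableAt.comp (f := fun τ : ℂ => ((τ/2 : ℂ), τ)) (𝕜 := ℂ) z hj hp
    simpa [Function.comp_def] using this
  have h2 : DifferentiableAt ℂ (fun τ => jacobiTheta₂ 0 τ) z :=
    differentiableAt_jacobiTheta₂_snd 0 hz
  have h3 : DifferentiableAt ℂ (fun τ => jacobiTheta₂ (1/2) τ) z :=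
    differentiableAt_jacobiTheta₂_snd (1/2) hz
  have h0 : DifferentiableAt ℂ (fun τ : ℂ => cexp (π*Complex.I*τ)) z :=
    ((differentiableAt_const _).mul differentiableAt_id).cexp
  exact ((h0.mul (h1.pow 4)).mul (h2.pow 4)).mul (h3.pow 4)

lemma term_A (n : ℤ) : jacobiTheta₂_term n (Complex.I/2) Complex.I = ((rexp (-(π*n^2 + π*n)) : ℝ) : ℂ) := by
  rw [jacobiTheta₂_term, Complex.ofReal_exp]
  congr 1
  push_cast
  rw [show 2*(π:ℂ)*Complex.I*n*(Complex.I/2) + π*Complex.I*n^2*Complex.I = (π*n)*(Complex.I*Complex.I) + (π*n^2)*(Complex.I*Complex.I) by ring, Complex.I_mul_I]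
  ring

lemma term_B (n : ℤ) : jacobiTheta₂_term n 0 Complex.I = ((rexp (-(π*n^2)) : ℝ) : ℂ) := by
  rw [jacobiTheta₂_term, Complex.ofReal_exp]
  congr 1
  push_cast
  rw [show 2*(π:ℂ)*Complex.I*n*0 + π*Complex.I*n^2*Complex.I = (π*n^2)*(Complex.I*Complex.I) by ring, Complex.I_mul_I]
  ring

lemma summable_A : Summable (fun n : ℤ => rexp (-(π*n^2 + π*n))) := by
  have hs : Summable (fun n : ℤ => ‖jacobiTheta₂_term n (Complex.I/2) Complex.I‖) := by
    rw [summable_norm_iff, summable_jacobiTheta₂_term_iff]; simp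
  refine hs.congr fun n => ?_
  rw [term_A, Complex.norm_real, Real.norm_eq_abs, abs_of_pos (Real.exp_pos _)]

lemma summable_B : Summable (fun n : ℤ => rexp (-(π*n^2))) := by
  have hs : Summable (fun n : ℤ => ‖jacobiTheta₂_term n 0 Complex.I‖) := by
    rw [summable_norm_iff, summable_jacobiTheta₂_term_iff]; simp
  refine hs.congr fun n => ?_
  rw [term_B, Complex.norm_real, Real.norm_eq_abs, abs_of_pos (Real.exp_pos _)]

lemma A_eq : jacobiTheta₂ (Complex.I/2) Complex.I = ((∑' n : ℤ, rexp (-(π*n^2 + π*n)) : ℝ) : ℂ) := by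
  have h1 := hasSum_jacobiTheta₂_term (Complex.I/2) (by simp : 0 < Complex.im Complex.I)
  refine h1.unique ?_
  simp only [term_A]
  have := Complex.ofRealCLM.hasSum summable_A.hasSum
  simpa using this

lemma B_eq : jacobiTheta₂ 0 Complex.I = ((∑' n : ℤ, rexp (-(π*n^2)) : ℝ) : ℂ) := by
  have h1 := hasSum_jacobiTheta₂_term 0 (by simp : 0 < Complex.im Complex.I)
  refine h1.unique ?_
  simp only [term_B]
  have := Complex.ofRealCLM.hasSum summable_B.hasSum
  simpa using this

lemma A_ne : jacobiTheta₂ (Complex.I/2) Complex.I ≠ 0 := by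
  rw [A_eq]
  have := Summable.tsum_pos summable_A (fun n => (Real.exp_pos _).le) 0 (by positivity)
  simpa using this.ne'

lemma B_ne : jacobiTheta₂ 0 Complex.I ≠ 0 := by
  rw [B_eq]
  have := Summable.tsum_pos summable_B (fun n => (Real.exp_pos _).le) 0 (by positivity)
  simpa using this.ne'

lemma C_eq : jacobiTheta₂ (1/2) Complex.I = cexp (-(π/4) : ℝ) * jacobiTheta₂ (Complex.I/2) Complex.I := by
  have h := jacobiTheta₂_functional_equation (1/2) Complex.I
  rw [show (-Complex.I*Complex.I : ℂ) = 1 by rw [show (-Complex.I*Complex.I : ℂ) = -(Complex.I*Complex.I) by ring, Complex.I_mul_I]; ring,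
    Complex.one_cpow, show (-1/Complex.I : ℂ) = Complex.I by
      rw [div_eq_iff Complex.I_ne_zero]; rw [Complex.I_mul_I],
    show ((1:ℂ)/2)/Complex.I = -(Complex.I/2) by
      rw [div_eq_iff Complex.I_ne_zero]; ring_nf; rw [Complex.I_sq]; ring] at h
  rw [h, jacobiTheta₂_neg_left, div_one, one_mul]
  congr 2
  rw [show -(π:ℂ)*Complex.I*(1/2)^2/Complex.I = -(π:ℂ)/4 * (Complex.I/Complex.I) by ring, div_self Complex.I_ne_zero]
  push_cast
  ring

lemma C_ne : jacobiTheta₂ (1/2) Complex.I ≠ 0 := by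
  rw [C_eq]
  exact mul_ne_zero (Complex.exp_ne_zero _) A_ne

lemma thetaProd_I_ne : thetaProd Complex.I ≠ 0 := by
  unfold thetaProd
  exact mul_ne_zero (mul_ne_zero (mul_ne_zero (Complex.exp_ne_zero _)
    (pow_ne_zero _ A_ne)) (pow_ne_zero _ B_ne)) (pow_ne_zero _ C_ne)

def thetaBound : ℝ := ∑' n : ℤ, rexp (-π*((n:ℝ)^2 - |(n:ℝ)|))

lemma summable_thetaBound : Summable (fun n : ℤ => rexp (-π*((n:ℝ)^2 - |(n:ℝ)|))) := by
  have := summable_pow_mul_jacobiTheta₂_term_bound (1/2) one_pos 0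
  simpa using this

lemma thetaBound_nonneg : 0 ≤ thetaBound :=
  tsum_nonneg fun n => (Real.exp_pos _).le

lemma theta_factor_le {τ : ℂ} (ht : 1 ≤ τ.im) {z : ℂ}
    (hbnd : ∀ n : ℤ, ‖jacobiTheta₂_term n z τ‖ ≤ rexp (-π*((n:ℝ)^2 - |(n:ℝ)|))) :
    ‖jacobiTheta₂ z τ‖ ≤ thetaBound := by
  have hτ : 0 < τ.im := lt_of_lt_of_le one_pos ht
  have hsum : Summable (jacobiTheta₂_term · z τ) := (summable_jacobiTheta₂_term_iff z τ).mpr hτ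
  have hnorm : Summable fun n => ‖jacobiTheta₂_term n z τ‖ := summable_norm_iff.mpr hsum
  calc ‖jacobiTheta₂ z τ‖ ≤ ∑' n, ‖jacobiTheta₂_term n z τ‖ := norm_tsum_le_tsum_norm hnorm
    _ ≤ thetaBound := Summable.tsum_le_tsum hbnd hnorm summable_thetaBound

lemma theta_zero_le {τ : ℂ} (ht : 1 ≤ τ.im) : ‖jacobiTheta₂ 0 τ‖ ≤ thetaBound := by
  refine theta_factor_le ht fun n => ?_
  rw [norm_jacobiTheta₂_term, Real.exp_le_exp]
  have h1 : ((n:ℝ))^2 - |(n:ℝ)| ≤ (n:ℝ)^2 := by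
    have := abs_nonneg ((n:ℝ)); linarith
  have h2 : ((n:ℝ))^2 ≤ (n:ℝ)^2 * τ.im := le_mul_of_one_le_right (sq_nonneg _) ht
  simp only [Complex.zero_im, mul_zero, sub_zero]
  nlinarith [Real.pi_pos]

lemma theta_half_le {τ : ℂ} (ht : 1 ≤ τ.im) : ‖jacobiTheta₂ (1/2) τ‖ ≤ thetaBound := by
  refine theta_factor_le ht fun n => ?_
  rw [norm_jacobiTheta₂_term, Real.exp_le_exp]
  have h1 : ((n:ℝ))^2 - |(n:ℝ)| ≤ (n:ℝ)^2 := by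
    have := abs_nonneg ((n:ℝ)); linarith
  have h2 : ((n:ℝ))^2 ≤ (n:ℝ)^2 * τ.im := le_mul_of_one_le_right (sq_nonneg _) ht
  have : Complex.im (1/2) = 0 := by simp
  rw [this]
  nlinarith [Real.pi_pos]

lemma theta_tau_le {τ : ℂ} (ht : 1 ≤ τ.im) : ‖jacobiTheta₂ (τ/2) τ‖ ≤ thetaBound := by
  refine theta_factor_le ht fun n => ?_
  rw [norm_jacobiTheta₂_term, Real.exp_le_exp]
  have him : Complex.im (τ/2) = τ.im / 2 := by
    rw [show τ/2 = τ * (1/2 : ℝ) by push_cast; ring, Complex.mul_im]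
    simp
    ring
  rw [him]
  have hnn : (0:ℝ) ≤ (n:ℝ)^2 + n := by
    have h : (0:ℤ) ≤ n * (n + 1) := by
      rcases le_or_gt 0 n with h | h
      · exact mul_nonneg h (by omega)
      · nlinarith
    have : (0:ℝ) ≤ (n:ℝ) * (n + 1) := by exact_mod_cast h
    nlinarith
  have habs : -(|(n:ℝ)|) ≤ (n:ℝ) := neg_abs_le _
  have key : (n:ℝ)^2 - |(n:ℝ)| ≤ ((n:ℝ)^2 + n) * τ.im := by
    nlinarith
  nlinarith [Real.pi_pos]

lemma thetaProd_norm_le {τ : ℂ} (ht : 1 ≤ τ.im) :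
    ‖thetaProd τ‖ ≤ rexp (-π * τ.im) * thetaBound^12 := by
  have hexp : ‖cexp (π*Complex.I*τ)‖ = rexp (-π * τ.im) := by
    rw [Complex.norm_exp]
    congr 1
    simp [Complex.mul_re, Complex.mul_im]
  have h1 := theta_tau_le ht
  have h2 := theta_zero_le ht
  have h3 := theta_half_le ht
  calc ‖thetaProd τ‖
      = ‖cexp (π*Complex.I*τ)‖ * ‖jacobiTheta₂ (τ/2) τ‖^4 * ‖jacobiTheta₂ 0 τ‖^4 *
        ‖jacobiTheta₂ (1/2) τ‖^4 := by
        simp [thetaProd, norm_mul, norm_pow]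
    _ ≤ rexp (-π * τ.im) * thetaBound^4 * thetaBound^4 * thetaBound^4 := by
        rw [hexp]
        gcongr <;> exact norm_nonneg _
    _ = rexp (-π * τ.im) * thetaBound^12 := by ring



lemma neg_one_mem (H : Subgroup SL(2,ℤ)) (hS : ModularGroup.S ∈ H) : (-1 : SL(2,ℤ)) ∈ H := by
  have h : ModularGroup.S * ModularGroup.S = (-1 : SL(2,ℤ)) := by
    ext i j
    rw [Matrix.SpecialLinearGroup.coe_mul]
    rw [ModularGroup.S_mul_S_eq]
    simp
  rw [← h]
  exact H.mul_mem hS hS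

lemma SL2Z_gen : Subgroup.closure ({ModularGroup.S, ModularGroup.T} : Set SL(2,ℤ)) = ⊤ := by
  set H := Subgroup.closure ({ModularGroup.S, ModularGroup.T} : Set SL(2,ℤ)) with hH
  have hS : ModularGroup.S ∈ H := Subgroup.subset_closure (by simp)
  have hT : ModularGroup.T ∈ H := Subgroup.subset_closure (by simp)
  have hTz : ∀ n : ℤ, ModularGroup.T^n ∈ H := fun n => H.zpow_mem hT n
  have hneg : (-1 : SL(2,ℤ)) ∈ H := neg_one_mem H hS
  suffices h : ∀ n : ℕ, ∀ γ : SL(2,ℤ), (γ.1 1 0).natAbs = n → γ ∈ H by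
    rw [eq_top_iff]; intro γ _; exact h _ γ rfl
  intro n
  induction n using Nat.strong_induction_on with
  | _ n ih =>
    intro γ hγ
    have hdet : γ.1 0 0 * γ.1 1 1 - γ.1 0 1 * γ.1 1 0 = 1 := by
      have := γ.2
      rwa [Matrix.det_fin_two] at this
    rcases eq_or_ne (γ.1 1 0) 0 with hc | hc
    · -- c = 0
      rw [hc, mul_zero, sub_zero] at hdet
      rcases Int.eq_one_or_neg_one_of_mul_eq_one' hdet with ⟨h1, h2⟩ | ⟨h1, h2⟩
      · have : γ = ModularGroup.T ^ (γ.1 0 1) := by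
          ext i j
          rw [ModularGroup.coe_T_zpow]
          fin_cases i <;> fin_cases j <;> simp [h1, h2, hc]
        rw [this]; exact hTz _
      · have : γ = (-1) * ModularGroup.T ^ (-(γ.1 0 1)) := by
          ext i j
          rw [Matrix.SpecialLinearGroup.coe_mul, ModularGroup.coe_T_zpow]
          fin_cases i <;> fin_cases j <;> simp [h1, h2, hc]
        rw [this]; exact H.mul_mem hneg (hTz _)
    · -- c ≠ 0
      set a := γ.1 0 0 with ha
      set c := γ.1 1 0 with hcdef
      set q := a / c with hq
      set r := a % c with hr
      have hrc : r = a - c * q := Int.emod_def a c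
      have hr0 : 0 ≤ r := Int.emod_nonneg a hc
      have hrlt : r < |c| := by have := Int.emod_lt a hc; rw [Int.abs_eq_natAbs]; exact this
      set γ' := ModularGroup.S * (ModularGroup.T^(-q) * γ) with hγ'
      have h10 : γ'.1 1 0 = r := by
        rw [hγ', Matrix.SpecialLinearGroup.coe_mul, Matrix.SpecialLinearGroup.coe_mul,
          ModularGroup.coe_S, ModularGroup.coe_T_zpow]
        rw [hrc]
        simp [Matrix.mul_apply, Fin.sum_univ_two, Matrix.vecMul, dotProduct]
        ring
      have hlt : (γ'.1 1 0).natAbs < n := by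
        rw [h10, ← hγ]
        rw [Int.abs_eq_natAbs] at hrlt
        omega
      have hmem := ih _ hlt γ' rfl
      have hgeq : γ = ModularGroup.T^q * (ModularGroup.S⁻¹ * γ') := by
        rw [hγ']
        group
      rw [hgeq]
      exact H.mul_mem (hTz q) (H.mul_mem (H.inv_mem hS) hmem)

def permHom : SL(2, ZMod 2) →* Equiv.Perm (Fin 2 → ZMod 2) where
  toFun g := (Matrix.SpecialLinearGroup.toLin' g).toEquiv
  map_one' := by ext v; simp
  map_mul' g h := by ext v; simp

def red : SL(2,ℤ) →* SL(2, ZMod 2) := Matrix.SpecialLinearGroup.map (Int.castRingHom (ZMod 2))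

def signChar : SL(2, ℤ) →* ℂˣ :=
  ((Units.map (Int.castRingHom ℂ).toMonoidHom).comp (Equiv.Perm.sign.comp permHom)).comp red

lemma signChar_S : signChar ModularGroup.S = -1 := by
  have h : Equiv.Perm.sign (permHom (red ModularGroup.S)) = -1 := by decide
  simp [signChar, h]

lemma signChar_T : signChar ModularGroup.T = -1 := by
  have h : Equiv.Perm.sign (permHom (red ModularGroup.T)) = -1 := by decide
  simp [signChar, h]

lemma char_eq (χ : SL(2, ℤ) →* ℂˣ) (hS : (χ ModularGroup.S : ℂ) = -1)
    (hT : (χ ModularGroup.T : ℂ) = -1) (γ : SL(2,ℤ)) : χ γ = signChar γ := by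
  have hγ : γ ∈ Subgroup.closure ({ModularGroup.S, ModularGroup.T} : Set SL(2,ℤ)) := by
    rw [SL2Z_gen]; trivial
  induction hγ using Subgroup.closure_induction with
  | mem x hx =>
    rcases hx with rfl | rfl
    · rw [signChar_S]; ext; rw [hS]; simp
    · rw [signChar_T]; ext; rw [hT]; simp
  | one => simp
  | mul x y _ _ ihx ihy => rw [_root_.map_mul, _root_.map_mul, ihx, ihy]
  | inv x _ ihx => rw [_root_.map_inv, _root_.map_inv, ihx]

lemma char_Gamma2 (χ : SL(2, ℤ) →* ℂˣ) (hS : (χ ModularGroup.S : ℂ) = -1)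
    (hT : (χ ModularGroup.T : ℂ) = -1) {γ : SL(2,ℤ)} (hγ : γ ∈ CongruenceSubgroup.Gamma 2) :
    χ γ = 1 := by
  rw [char_eq χ hS hT γ]
  have h1 : red γ = 1 := hγ
  rw [signChar]
  simp [h1]

open scoped ModularForm Manifold Topology

lemma det_toGL (γ : SL(2,ℤ)) : (((toGL γ : GL (Fin 2) ℝ)) : Matrix (Fin 2) (Fin 2) ℝ).det = 1 := by
  rw [toGL, Matrix.SpecialLinearGroup.coe_GLPos_coe_GL_coe_matrix]
  exact Matrix.SpecialLinearGroup.det_coe _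

lemma wtSlash_SL (k : ℤ) (γ : SL(2,ℤ)) (f : ℍ → ℂ) (τ : ℍ) :
    wtSlash k (toGL γ) f τ = (UpperHalfPlane.denom (toGL γ) τ)^(-k) * f (γ • τ) := by
  unfold wtSlash
  rw [det_toGL, Real.one_rpow, Complex.ofReal_one, one_mul]
  rfl

lemma wtSlash_eq_slash (k : ℤ) (γ : SL(2,ℤ)) (f : ℍ → ℂ) : wtSlash k (toGL γ) f = f ∣[k] γ := by
  ext τ
  rw [wtSlash_SL, ModularForm.SL_slash_apply]
  rw [mul_comm]
  rfl

/-- The basic eta-power function on `ℍ`. -/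
def etaPow : ℍ → ℂ := fun τ => thetaProd ↑τ

lemma etaPow_T : wtSlash 6 (toGL ModularGroup.T) etaPow = -etaPow := by
  ext τ
  rw [wtSlash_SL]
  have hd : UpperHalfPlane.denom (toGL ModularGroup.T) τ = 1 := by
    rw [show UpperHalfPlane.denom (toGL ModularGroup.T) τ
        = ((ModularGroup.T 1 0 : ℝ):ℂ) * τ + ((ModularGroup.T 1 1 : ℝ):ℂ) from rfl]
    simp [ModularGroup.coe_T]
  have hsm : ((ModularGroup.T • τ : ℍ) : ℂ) = (τ:ℂ) + 1 := by
    rw [UpperHalfPlane.modular_T_smul]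
    simp [UpperHalfPlane.coe_vadd]
    ring
  rw [hd]
  show 1 ^ (-(6:ℤ)) * thetaProd ((ModularGroup.T • τ : ℍ) : ℂ) = -etaPow τ
  rw [hsm, _root_.one_zpow, one_mul, thetaProd_T]
  rfl

lemma etaPow_S : wtSlash 6 (toGL ModularGroup.S) etaPow = -etaPow := by
  ext τ
  rw [wtSlash_SL]
  have hd : UpperHalfPlane.denom (toGL ModularGroup.S) τ = (τ:ℂ) := by
    rw [show UpperHalfPlane.denom (toGL ModularGroup.S) τ
        = ((ModularGroup.S 1 0 : ℝ):ℂ) * τ + ((ModularGroup.S 1 1 : ℝ):ℂ) from rfl]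
    simp [ModularGroup.coe_S]
  have hsm : ((ModularGroup.S • τ : ℍ) : ℂ) = -1/(τ:ℂ) := by
    rw [UpperHalfPlane.modular_S_smul]
    simp [UpperHalfPlane.coe_mk]
    ring
  rw [hd]
  show ((τ:ℂ)) ^ (-(6:ℤ)) * thetaProd ((ModularGroup.S • τ : ℍ) : ℂ) = -etaPow τ
  rw [hsm, thetaProd_S τ.im_pos]
  have hτ0 : (τ:ℂ) ≠ 0 := UpperHalfPlane.ne_zero τ
  rw [_root_.zpow_neg, show ((6:ℤ)) = ((6:ℕ):ℤ) from rfl, zpow_natCast]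
  show ((τ:ℂ)^(6:ℕ))⁻¹ * (-(τ:ℂ)^6 * thetaProd ↑τ) = -thetaProd ↑τ
  field_simp

lemma etaPow_sign (γ : SL(2,ℤ)) : wtSlash 6 (toGL γ) etaPow = (signChar γ : ℂ) • etaPow := by
  rw [wtSlash_eq_slash]
  have hγ : γ ∈ Subgroup.closure ({ModularGroup.S, ModularGroup.T} : Set SL(2,ℤ)) := by
    rw [SL2Z_gen]; trivial
  induction hγ using Subgroup.closure_induction with
  | mem x hx =>
    rcases hx with rfl | rfl
    · rw [← wtSlash_eq_slash, etaPow_S, signChar_S]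
      simp
    · rw [← wtSlash_eq_slash, etaPow_T, signChar_T]
      simp
  | one =>
    rw [_root_.map_one, SlashAction.slash_one]
    simp
  | mul x y _ _ ihx ihy =>
    rw [SlashAction.slash_mul, ihx, ModularForm.SL_smul_slash, ihy, smul_smul, _root_.map_mul]
    push_cast
    ring_nf
  | inv x _ ihx =>
    have hc : ((signChar x : ℂ)) ≠ 0 := Units.ne_zero _
    have h1 : (signChar x : ℂ) • (etaPow ∣[(6:ℤ)] x⁻¹) = etaPow := by
      have h0 : etaPow ∣[(6:ℤ)] ((1:SL(2,ℤ))) = etaPow := SlashAction.slash_one _ _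
      rw [show (1:SL(2,ℤ)) = x * x⁻¹ by group, SlashAction.slash_mul, ihx,
        ModularForm.SL_smul_slash] at h0
      exact h0
    rw [_root_.map_inv, Units.val_inv_eq_inv_val]
    exact ((inv_smul_eq_iff₀ hc).mpr h1.symm).symm

lemma etaPow_holo : MDifferentiable 𝓘(ℂ) 𝓘(ℂ) etaPow := by
  rw [UpperHalfPlane.mdifferentiable_iff]
  intro z hz
  refine ((thetaProd_diff hz).differentiableWithinAt).congr (fun w hw => ?_) ?_
  · show etaPow (UpperHalfPlane.ofComplex w) = thetaProd w
    rw [show UpperHalfPlane.ofComplex w = ⟨w, hw⟩ from ?_]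
    · rfl
    · have := UpperHalfPlane.ofComplex_apply ⟨w, hw⟩
      exact this
  · show etaPow (UpperHalfPlane.ofComplex z) = thetaProd z
    rw [show UpperHalfPlane.ofComplex z = ⟨z, hz⟩ from ?_]
    · rfl
    · have := UpperHalfPlane.ofComplex_apply ⟨z, hz⟩
      exact this

lemma etaPow_zero_at : UpperHalfPlane.IsZeroAtImInfty etaPow := by
  have him : Filter.Tendsto (fun z : ℍ => z.im) UpperHalfPlane.atImInfty Filter.atTop :=
    Filter.tendsto_comap
  have h0 : Filter.Tendsto (fun t : ℝ => rexp (-π * t) * thetaBound^12)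
      Filter.atTop (𝓝 0) := by
    have h1 : Filter.Tendsto (fun t : ℝ => rexp (-π * t)) Filter.atTop (𝓝 0) := by
      have h2 : Filter.Tendsto (fun t : ℝ => π * t) Filter.atTop Filter.atTop :=
        Filter.Tendsto.const_mul_atTop Real.pi_pos Filter.tendsto_id
      have := Real.tendsto_exp_neg_atTop_nhds_zero.comp h2
      simpa [Function.comp_def, neg_mul] using this
    simpa using h1.mul_const (thetaBound^12)
  have h1 := h0.comp him
  refine squeeze_zero_norm' ?_ h1
  rw [Filter.eventually_iff_exists_mem]
  refine ⟨{z : ℍ | 1 ≤ z.im}, (UpperHalfPlane.atImInfty_mem _).mpr ⟨1, fun z hz => hz⟩,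
    fun z hz => ?_⟩
  exact thetaProd_norm_le hz

lemma etaPow_I_ne : etaPow ⟨Complex.I, by norm_num⟩ ≠ 0 := thetaProd_I_ne


/-- there is a nonzero cusp form of weight `6` for `Γ(2)` transforming under
`SL(2,ℤ)` by the character `χ` with `χ(S) = χ(T) = -1`; equivalently, a nonzero cusp form
`f` of weight `6` for `Γ(2)` with `f∣[6]S = -f` and `f∣[6]T = -f`. -/
theorem exists_nonzero_weight_six_chi_form (χ : SL(2, ℤ) →* ℂˣ)
    (hS : (χ ModularGroup.S : ℂ) = -1) (hT : (χ ModularGroup.T : ℂ) = -1) :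
    ∃ f : CuspForm (Gamma 2) 6, f ≠ 0 ∧
      (∀ γ : SL(2, ℤ), wtSlash 6 (toGL γ) ⇑f = (χ γ : ℂ) • ⇑f) ∧
      wtSlash 6 (toGL ModularGroup.S) ⇑f = -⇑f ∧
      wtSlash 6 (toGL ModularGroup.T) ⇑f = -⇑f := by
  have hval : ∀ γ : SL(2,ℤ), (χ γ : ℂ) = (signChar γ : ℂ) := fun γ => by
    rw [char_eq χ hS hT γ]
  refine ⟨{ toFun := etaPow
            slash_action_eq' := fun γ hγ => ?_
            holo' := etaPow_holo
            zero_at_cusps' := fun hc => (OnePoint.isZeroAt_iff_forall_SL2Z ((Subgroup.IsArithmetic.isCusp_iff_isCusp_SL2Z _).mp hc)).mpr fun A _ => ?_ }, ?_, ?_, ?_, ?_⟩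
  · obtain ⟨γ, hγ, rfl⟩ := hγ
    change etaPow ∣[(6:ℤ)] γ = etaPow
    rw [← wtSlash_eq_slash, etaPow_sign γ, char_Gamma2 signChar (by rw [signChar_S]; simp)
      (by rw [signChar_T]; simp) hγ]
    simp
  · show UpperHalfPlane.IsZeroAtImInfty (etaPow ∣[(6:ℤ)] A)
    rw [← wtSlash_eq_slash, etaPow_sign A]
    have h := etaPow_zero_at
    have : Filter.Tendsto ((signChar A : ℂ) • etaPow) UpperHalfPlane.atImInfty (𝓝 0) := by
      have h2 := h.const_smul (signChar A : ℂ)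
      simp only [smul_zero] at h2; exact h2
    exact this
  · intro h
    have h2 := DFunLike.congr_fun h (⟨Complex.I, by norm_num⟩ : ℍ)
    exact etaPow_I_ne h2
  · intro γ
    rw [hval γ]
    exact etaPow_sign γ
  · exact etaPow_S
  · exact etaPow_T

end
end
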